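/- arXiv:2001.07033 — 6 statements merged into one kernel-verified Lean document; each statement's English description precedes it below -/
import Mathlib

section
/- Let $P_0$ be a probability measure on $[0,1]$ with positive mean, let $Q$ be a probability measure on $[0,1]$, and let $(b_n)_{n\ge 1}$ be a sequence in $[0,1)$. Define recursively $P_n(dx) = (1-b_n)\frac{x P_{n-1}(dx)}{\int y P_{n-1}(dy)} + b_n Q(dx)$ (assuming each $P_{n-1}$ has positive mean so the recursion is well defined). Then for every $n \ge 1$, $P_n(dx) = \Big(\prod_{l=0}^{n-1}\frac{1-b_{l+1}}{\int y P_l(dy)}\Big) x^n P_0(dx) + \sum_{j=1}^n \Big(\prod_{l=j}^{n-1}\frac{1-b_{l+1}}{\int y P_l(dy)}\Big) b_j m_{n-j} Q^{n-j}(dx)$, where $m_k = \int x^k Q(dx)$ and $Q^k(dx) = x^k Q(dx)/m_k$. -/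
open MeasureTheory Set

lemma wd_finset_sum {ι : Type*} (s : Finset ι) (μ : ι → Measure ℝ) (f : ℝ → ENNReal) :
    (∑ i ∈ s, μ i).withDensity f = ∑ i ∈ s, (μ i).withDensity f := by
  classical
  induction s using Finset.induction_on with
  | empty => simp [withDensity_zero_left]
  | insert _ _ h ih =>
      rw [Finset.sum_insert h, Finset.sum_insert h, withDensity_add_measure, ih]

theorem stmt_0 (P : ℕ → Measure ℝ) (Q : Measure ℝ) (b : ℕ → ℝ)
    (hP : ∀ n, IsProbabilityMeasure (P n))
    (hPsupp : ∀ n, P n (Set.Icc (0:ℝ) 1)ᶜ = 0)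
    (hQ : IsProbabilityMeasure Q) (hQsupp : Q (Set.Icc (0:ℝ) 1)ᶜ = 0)
    (hb : ∀ n, b n ∈ Set.Ico (0:ℝ) 1)
    (hmean : ∀ n, 0 < ∫ y, y ∂P n)
    (hm : ∀ k, 0 < ∫ x, x ^ k ∂Q)
    (hrec : ∀ n, 1 ≤ n → P n
      = (P (n-1)).withDensity (fun x => ENNReal.ofReal ((1 - b n) * x / ∫ y, y ∂P (n-1)))
        + ENNReal.ofReal (b n) • Q) :
    ∀ n, 1 ≤ n → P n
      = (P 0).withDensity
          (fun x => ENNReal.ofReal ((∏ l ∈ Finset.range n, ((1 - b (l+1)) / ∫ y, y ∂P l)) * x ^ n))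
        + ∑ j ∈ Finset.Icc 1 n,
            ENNReal.ofReal ((∏ l ∈ Finset.Icc j (n-1), ((1 - b (l+1)) / ∫ y, y ∂P l))
                * b j * (∫ x, x ^ (n-j) ∂Q))
              • Q.withDensity (fun x => ENNReal.ofReal (x ^ (n-j) / ∫ y, y ^ (n-j) ∂Q)) := by
  haveI := hQ
  have hb1 : ∀ l, (0:ℝ) < 1 - b l := fun l => by have := (hb l).2; linarith
  have hbnn : ∀ l, (0:ℝ) ≤ b l := fun l => (hb l).1
  have hCnn : ∀ s : Finset ℕ, (0:ℝ) ≤ ∏ l ∈ s, ((1 - b (l+1)) / ∫ y, y ∂P l) :=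
    fun s => Finset.prod_nonneg fun l _ => div_nonneg (hb1 (l+1)).le (hmean l).le
  have hae : ∀ μ : Measure ℝ, μ (Set.Icc (0:ℝ) 1)ᶜ = 0 → ∀ᵐ x ∂μ, x ∈ Set.Icc (0:ℝ) 1 := by
    intro μ h
    rw [ae_iff]
    simpa [Set.compl_def] using h
  have hmf : ∀ r s : ℝ, Measurable fun x : ℝ => ENNReal.ofReal (r * x / s) :=
    fun r s => ((measurable_const.mul measurable_id).div_const s).ennreal_ofReal
  have hmg : ∀ (c : ℝ) (m : ℕ), Measurable fun x : ℝ => ENNReal.ofReal (c * x ^ m) :=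
    fun c m => (measurable_const.mul (measurable_id.pow_const m)).ennreal_ofReal
  have hmh : ∀ (c : ℝ) (m : ℕ), Measurable fun x : ℝ => ENNReal.ofReal (x ^ m / c) :=
    fun c m => ((measurable_id.pow_const m).div_const c).ennreal_ofReal
  intro n hn
  induction n, hn using Nat.le_induction with
  | base =>
    rw [hrec 1 le_rfl]
    simp only [show (1:ℕ) - 1 = 0 from rfl]
    congr 1
    · refine congrArg _ (funext fun x => congrArg ENNReal.ofReal ?_)
      rw [Finset.prod_range_one, pow_one]
      ring
    · rw [Finset.Icc_self, Finset.sum_singleton,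
        Finset.Icc_eq_empty (by norm_num : ¬(1:ℕ) ≤ 0), Finset.prod_empty]
      simp [withDensity_one]
  | succ n hn ih =>
    obtain ⟨k, rfl⟩ : ∃ k, n = k + 1 := ⟨n - 1, by omega⟩
    simp only [Nat.add_sub_cancel] at ih ⊢
    rw [hrec (k+1+1) (by omega)]
    simp only [Nat.add_sub_cancel]
    set mn := ∫ y, y ∂P (k+1) with hmn
    have hM : mn ≠ 0 := by rw [hmn]; exact (hmean (k+1)).ne'
    rw [ih, withDensity_add_measure, wd_finset_sum]
    have hT1 : ((P 0).withDensity (fun x => ENNReal.ofReal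
          ((∏ l ∈ Finset.range (k+1), ((1 - b (l+1)) / ∫ y, y ∂P l)) * x ^ (k+1)))).withDensity
          (fun x => ENNReal.ofReal ((1 - b (k+1+1)) * x / mn))
        = (P 0).withDensity (fun x => ENNReal.ofReal
          ((∏ l ∈ Finset.range (k+1+1), ((1 - b (l+1)) / ∫ y, y ∂P l)) * x ^ (k+1+1))) := by
      rw [← withDensity_mul _ (hmg _ _) (hmf _ _)]
      apply withDensity_congr_ae
      filter_upwards [hae _ (hPsupp 0)] with x hx
      simp only [Pi.mul_apply]
      rw [← ENNReal.ofReal_mul (mul_nonneg (hCnn _) (pow_nonneg hx.1 _))]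
      refine congrArg ENNReal.ofReal ?_
      conv_rhs => rw [Finset.prod_range_succ]
      rw [← hmn]
      set C := ∏ l ∈ Finset.range (k+1), ((1 - b (l+1)) / ∫ y, y ∂P l) with hC
      field_simp
      ring
    have hsum : ∑ j ∈ Finset.Icc 1 (k+1),
          ((ENNReal.ofReal ((∏ l ∈ Finset.Icc j k, ((1 - b (l+1)) / ∫ y, y ∂P l))
                * b j * (∫ x, x ^ (k+1-j) ∂Q))
            • Q.withDensity (fun x => ENNReal.ofReal (x ^ (k+1-j) / ∫ y, y ^ (k+1-j) ∂Q))).withDensity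
            (fun x => ENNReal.ofReal ((1 - b (k+1+1)) * x / mn)))
        = ∑ j ∈ Finset.Icc 1 (k+1),
            ENNReal.ofReal ((∏ l ∈ Finset.Icc j (k+1), ((1 - b (l+1)) / ∫ y, y ∂P l))
                * b j * (∫ x, x ^ (k+1+1-j) ∂Q))
              • Q.withDensity (fun x => ENNReal.ofReal (x ^ (k+1+1-j) / ∫ y, y ^ (k+1+1-j) ∂Q)) := by
      refine Finset.sum_congr rfl fun j hj => ?_
      obtain ⟨hj1, hj2⟩ := Finset.mem_Icc.mp hj
      have he : k+1+1-j = (k+1-j)+1 := by omega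
      have hA : (∫ x, x ^ (k+1-j) ∂Q) ≠ 0 := (hm (k+1-j)).ne'
      have hB : (∫ x, x ^ (k+1+1-j) ∂Q) ≠ 0 := (hm (k+1+1-j)).ne'
      rw [withDensity_smul_measure, ← withDensity_mul _ (hmh _ _) (hmf _ _)]
      have key : Q.withDensity ((fun x => ENNReal.ofReal (x ^ (k+1-j) / ∫ y, y ^ (k+1-j) ∂Q))
            * (fun x => ENNReal.ofReal ((1 - b (k+1+1)) * x / mn)))
          = ENNReal.ofReal ((1 - b (k+1+1)) * (∫ x, x ^ (k+1+1-j) ∂Q)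
              / ((∫ y, y ^ (k+1-j) ∂Q) * mn))
            • Q.withDensity (fun x => ENNReal.ofReal (x ^ (k+1+1-j) / ∫ y, y ^ (k+1+1-j) ∂Q)) := by
        rw [← withDensity_smul _ (hmh _ _)]
        apply withDensity_congr_ae
        filter_upwards [hae _ hQsupp] with x hx
        simp only [Pi.mul_apply, Pi.smul_apply, smul_eq_mul]
        rw [← ENNReal.ofReal_mul (div_nonneg (pow_nonneg hx.1 _) (hm _).le),
          ← ENNReal.ofReal_mul (div_nonneg (mul_nonneg (hb1 _).le (hm _).le)
            (mul_nonneg (hm _).le ((hmean (k+1)).le.trans_eq hmn.symm)))]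
        refine congrArg ENNReal.ofReal ?_
        rw [he]
        have hB' : (∫ y, y ^ (k+1-j+1) ∂Q) ≠ 0 := by rw [← he]; exact hB
        set M1 := ∫ y, y ^ (k+1-j) ∂Q with hM1
        set M2 := ∫ y, y ^ (k+1-j+1) ∂Q with hM2
        field_simp
        ring
      rw [key, smul_smul,
        ← ENNReal.ofReal_mul (mul_nonneg (mul_nonneg (hCnn _) (hbnn j)) (hm _).le)]
      refine congrArg (fun c => c • _) (congrArg ENNReal.ofReal ?_)
      rw [Finset.prod_Icc_succ_top (show j ≤ k+1 by omega), ← hmn]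
      set A := ∏ l ∈ Finset.Icc j k, ((1 - b (l+1)) / ∫ y, y ∂P l) with hAA
      set M1 := ∫ x, x ^ (k+1-j) ∂Q with hM1
      set M2 := ∫ x, x ^ (k+1+1-j) ∂Q with hM2
      field_simp
    have hlast : ENNReal.ofReal ((∏ l ∈ Finset.Icc (k+1+1) (k+1), ((1 - b (l+1)) / ∫ y, y ∂P l))
            * b (k+1+1) * (∫ x, x ^ (k+1+1-(k+1+1)) ∂Q))
          • Q.withDensity (fun x => ENNReal.ofReal (x ^ (k+1+1-(k+1+1)) / ∫ y, y ^ (k+1+1-(k+1+1)) ∂Q))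
        = ENNReal.ofReal (b (k+1+1)) • Q := by
      rw [Finset.Icc_eq_empty (by omega : ¬ k+1+1 ≤ k+1), Finset.prod_empty, Nat.sub_self]
      simp [withDensity_one]
    rw [hT1, hsum, Finset.sum_Icc_succ_top (by omega : 1 ≤ k+1+1), hlast]
    abel
end

section
/- Let $u_1, u_2$ be Borel probability measures on $[0,1]$ with common essential supremum $h > 0$, such that $u_1(A) \le u_2(A)$ for every Borel $A \subseteq [0,h)$. Suppose for some $\epsilon > 0$ and $a \in (0,h)$ we have $u_1([0,a]) + \epsilon \le u_2([0,a])$. Then $\int y\, u_1(dy) \ge c(a,\epsilon) \int y\, u_2(dy)$ where $c(a,\epsilon) = \frac{1}{1 - \epsilon(h-a)} > 1$. -/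
open MeasureTheory Set
open scoped ENNReal

private lemma aux_tail_zero (u : Measure ℝ) {h : ℝ}
    (hsupp : u (Set.Icc (0:ℝ) 1)ᶜ = 0)
    (hS : sSup {x : ℝ | 0 < u (Set.Icc x 1)} = h) :
    ∀ t, h ≤ t → u (Set.Ioi t) = 0 := by
  have hbdd : BddAbove {x : ℝ | 0 < u (Set.Icc x 1)} := by
    refine ⟨1, fun x hx => ?_⟩
    by_contra hx1
    push_neg at hx1
    rw [Set.mem_setOf_eq, Set.Icc_eq_empty (by linarith)] at hx
    simp at hx
  have hzero : ∀ x, h < x → u (Set.Icc x 1) = 0 := by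
    intro x hx
    by_contra hne
    have hmem : x ∈ {x : ℝ | 0 < u (Set.Icc x 1)} := pos_iff_ne_zero.mpr hne
    have := le_csSup hbdd hmem
    rw [hS] at this; linarith
  intro t ht
  have h1 : u (Set.Ioc t 1) = 0 := by
    have hsub : Set.Ioc t 1 ⊆ ⋃ n : ℕ, Set.Icc (t + 1/(n+1)) 1 := by
      intro y hy
      obtain ⟨n, hn⟩ := exists_nat_one_div_lt (sub_pos.mpr hy.1)
      exact Set.mem_iUnion.mpr ⟨n, ⟨by linarith, hy.2⟩⟩
    refine le_antisymm ?_ (by positivity)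
    calc u (Set.Ioc t 1) ≤ ∑' n : ℕ, u (Set.Icc (t + 1/(n+1)) 1) :=
          (measure_mono hsub).trans (measure_iUnion_le _)
      _ = 0 := by
          rw [ENNReal.tsum_eq_zero]
          intro n
          apply hzero
          have : (0:ℝ) < 1/((n:ℝ)+1) := by positivity
          linarith
  refine le_antisymm ?_ (by positivity)
  calc u (Set.Ioi t) ≤ u (Set.Ioc t 1 ∪ (Set.Icc (0:ℝ) 1)ᶜ) := by
        apply measure_mono
        intro y hy
        by_cases h2 : y ∈ Set.Icc (0:ℝ) 1
        · exact Or.inl ⟨hy, h2.2⟩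
        · exact Or.inr h2
    _ ≤ u (Set.Ioc t 1) + u (Set.Icc (0:ℝ) 1)ᶜ := measure_union_le _ _
    _ = 0 := by rw [h1, hsupp, add_zero]

private lemma aux_dist (u : Measure ℝ) [IsProbabilityMeasure u]
    (hsupp : u (Set.Icc (0:ℝ) 1)ᶜ = 0) {t : ℝ} (ht0 : 0 ≤ t) (ht1 : t ≤ 1) :
    (u (Set.Ioi t)).toReal = 1 - (u (Set.Icc 0 t)).toReal := by
  have h1 : u (Set.Icc (0:ℝ) 1) = 1 := by
    have h2 := measure_add_measure_compl (μ := u) (measurableSet_Icc : MeasurableSet (Set.Icc (0:ℝ) 1))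
    rw [hsupp, add_zero, measure_univ] at h2
    exact h2
  have hIoi : u (Set.Ioi t) = u (Set.Ioc t 1) := by
    refine le_antisymm ?_ (measure_mono Set.Ioc_subset_Ioi_self)
    calc u (Set.Ioi t) ≤ u (Set.Ioc t 1 ∪ (Set.Icc (0:ℝ) 1)ᶜ) := by
          apply measure_mono
          intro y hy
          by_cases h2 : y ∈ Set.Icc (0:ℝ) 1
          · exact Or.inl ⟨hy, h2.2⟩
          · exact Or.inr h2
      _ ≤ u (Set.Ioc t 1) + u (Set.Icc (0:ℝ) 1)ᶜ := measure_union_le _ _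
      _ = u (Set.Ioc t 1) := by rw [hsupp, add_zero]
  have hsplit : u (Set.Icc 0 t) + u (Set.Ioc t 1) = 1 := by
    rw [← measure_union (Set.disjoint_left.mpr (fun y hy1 hy2 => absurd hy1.2 (not_le.mpr hy2.1)))
      measurableSet_Ioc, Set.Icc_union_Ioc_eq_Icc ht0 ht1, h1]
  have := congrArg ENNReal.toReal hsplit
  rw [ENNReal.toReal_add (measure_ne_top u _) (measure_ne_top u _), ENNReal.toReal_one] at this
  rw [hIoi]
  linarith

private lemma aux_int (u : Measure ℝ) [IsProbabilityMeasure u] {h : ℝ}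
    (htail : ∀ t, h ≤ t → u (Set.Ioi t) = 0) :
    MeasureTheory.IntegrableOn (fun t => (u (Set.Ioi t)).toReal) (Set.Ioi (0:ℝ)) := by
  have hmeas : Measurable (fun t => (u (Set.Ioi t)).toReal) := by
    apply Measurable.ennreal_toReal
    exact Antitone.measurable (fun s t hst => measure_mono (Set.Ioi_subset_Ioi hst))
  refine Integrable.mono' (g := Set.indicator (Set.Ioc 0 h) (fun _ => (1:ℝ)))
    ?_ hmeas.aestronglyMeasurable ?_
  · rw [MeasureTheory.integrable_indicator_iff measurableSet_Ioc]
    refine (integrableOn_const_iff enorm_ne_top).mpr (Or.inr ?_)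
    exact lt_of_le_of_lt (Measure.restrict_apply_le _ _) measure_Ioc_lt_top
  · refine (ae_restrict_iff' measurableSet_Ioi).mpr (Filter.Eventually.of_forall fun t ht => ?_)
    rcases le_or_gt t h with h1 | h1
    · rw [Set.indicator_of_mem (show t ∈ Set.Ioc 0 h from ⟨ht, h1⟩), Real.norm_eq_abs, abs_of_nonneg ENNReal.toReal_nonneg]
      calc (u (Set.Ioi t)).toReal ≤ (1:ENNReal).toReal :=
            ENNReal.toReal_mono ENNReal.one_ne_top prob_le_one
        _ = 1 := ENNReal.toReal_one
    · rw [Set.indicator_of_notMem (fun hc => absurd hc.2 (not_le.mpr h1)), htail t h1.le]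
      simp

theorem stmt_4 (u₁ u₂ : Measure ℝ) (h a ε : ℝ)
    (hu₁ : IsProbabilityMeasure u₁) (hu₂ : IsProbabilityMeasure u₂)
    (hsupp₁ : u₁ (Set.Icc (0:ℝ) 1)ᶜ = 0) (hsupp₂ : u₂ (Set.Icc (0:ℝ) 1)ᶜ = 0)
    (hS₁ : sSup {x : ℝ | 0 < u₁ (Set.Icc x 1)} = h)
    (hS₂ : sSup {x : ℝ | 0 < u₂ (Set.Icc x 1)} = h)
    (hpos : 0 < h)
    (hle : ∀ A : Set ℝ, MeasurableSet A → A ⊆ Set.Ico 0 h → u₁ A ≤ u₂ A)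
    (hε : 0 < ε) (ha : a ∈ Set.Ioo 0 h)
    (hgap : (u₁ (Set.Icc 0 a)).toReal + ε ≤ (u₂ (Set.Icc 0 a)).toReal) :
    (1 : ℝ) < 1 / (1 - ε * (h - a))
      ∧ (1 / (1 - ε * (h - a))) * ∫ y, y ∂u₂ ≤ ∫ y, y ∂u₁ := by
  obtain ⟨ha0, hah⟩ := ha
  -- h ≤ 1
  have hh1 : h ≤ 1 := by
    rw [← hS₁]
    apply Real.sSup_le _ zero_le_one
    intro x hx
    by_contra hx1
    push_neg at hx1
    rw [Set.mem_setOf_eq, Set.Icc_eq_empty (by linarith)] at hx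
    simp at hx
  -- a.e. membership
  have hae₁ : ∀ᵐ y ∂u₁, y ∈ Set.Icc (0:ℝ) 1 := by rw [ae_iff]; exact hsupp₁
  have hae₂ : ∀ᵐ y ∂u₂, y ∈ Set.Icc (0:ℝ) 1 := by rw [ae_iff]; exact hsupp₂
  have hnn₁ : 0 ≤ᵐ[u₁] fun y => y := by filter_upwards [hae₁] with y hy; exact hy.1
  have hnn₂ : 0 ≤ᵐ[u₂] fun y => y := by filter_upwards [hae₂] with y hy; exact hy.1
  have hid₁ : Integrable (fun y => y) u₁ := by
    refine Integrable.mono' (integrable_const 1) measurable_id.aestronglyMeasurable ?_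
    filter_upwards [hae₁] with y hy
    rw [Real.norm_eq_abs, abs_le]; exact ⟨by linarith [hy.1], hy.2⟩
  have hid₂ : Integrable (fun y => y) u₂ := by
    refine Integrable.mono' (integrable_const 1) measurable_id.aestronglyMeasurable ?_
    filter_upwards [hae₂] with y hy
    rw [Real.norm_eq_abs, abs_le]; exact ⟨by linarith [hy.1], hy.2⟩
  -- layer cake
  have hlc₁ : ∫ y, y ∂u₁ = ∫ t in Set.Ioi (0:ℝ), (u₁ (Set.Ioi t)).toReal :=
    hid₁.integral_eq_integral_meas_lt hnn₁
  have hlc₂ : ∫ y, y ∂u₂ = ∫ t in Set.Ioi (0:ℝ), (u₂ (Set.Ioi t)).toReal :=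
    hid₂.integral_eq_integral_meas_lt hnn₂
  have htail₁ := aux_tail_zero u₁ hsupp₁ hS₁
  have htail₂ := aux_tail_zero u₂ hsupp₂ hS₂
  have hint₁ := aux_int u₁ htail₁
  have hint₂ := aux_int u₂ htail₂
  -- pointwise estimates
  have hdiff : ∀ t ∈ Set.Ioi (0:ℝ), (u₂ (Set.Ioi t)).toReal ≤ (u₁ (Set.Ioi t)).toReal := by
    intro t ht
    rcases lt_or_ge t h with htl | htg
    · rw [aux_dist u₁ hsupp₁ (le_of_lt ht) (htl.le.trans hh1),
        aux_dist u₂ hsupp₂ (le_of_lt ht) (htl.le.trans hh1)]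
      have hA := hle (Set.Icc 0 t) measurableSet_Icc
        (fun y hy => ⟨hy.1, lt_of_le_of_lt hy.2 htl⟩)
      have h2 : (u₁ (Set.Icc 0 t)).toReal ≤ (u₂ (Set.Icc 0 t)).toReal :=
        ENNReal.toReal_mono (measure_ne_top _ _) hA
      linarith
    · rw [htail₁ t htg, htail₂ t htg]
  have hgap' : ∀ t ∈ Set.Ico a h,
      ε ≤ (u₁ (Set.Ioi t)).toReal - (u₂ (Set.Ioi t)).toReal := by
    rintro t ⟨hta, hth⟩
    have ht0 : (0:ℝ) ≤ t := le_of_lt (lt_of_lt_of_le ha0 hta)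
    rw [aux_dist u₁ hsupp₁ ht0 (hth.le.trans hh1), aux_dist u₂ hsupp₂ ht0 (hth.le.trans hh1)]
    have hsplit : ∀ u : Measure ℝ, IsProbabilityMeasure u →
        (u (Set.Icc 0 t)).toReal = (u (Set.Icc 0 a)).toReal + (u (Set.Ioc a t)).toReal := by
      intro u hu
      rw [← ENNReal.toReal_add (measure_ne_top u _) (measure_ne_top u _),
        ← measure_union (Set.disjoint_left.mpr
          (fun y hy1 hy2 => absurd hy1.2 (not_le.mpr hy2.1))) measurableSet_Ioc,
        Set.Icc_union_Ioc_eq_Icc ha0.le hta]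
    rw [hsplit u₁ hu₁, hsplit u₂ hu₂]
    have hB := hle (Set.Ioc a t) measurableSet_Ioc
      (fun y hy => ⟨le_of_lt (lt_of_le_of_lt ha0.le hy.1), lt_of_le_of_lt hy.2 hth⟩)
    have h3 : (u₁ (Set.Ioc a t)).toReal ≤ (u₂ (Set.Ioc a t)).toReal :=
      ENNReal.toReal_mono (measure_ne_top _ _) hB
    linarith
  -- main estimate
  have hmain : ε * (h - a) ≤ (∫ y, y ∂u₁) - ∫ y, y ∂u₂ := by
    rw [hlc₁, hlc₂, ← integral_sub hint₁ hint₂]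
    have hnnd : 0 ≤ᵐ[volume.restrict (Set.Ioi (0:ℝ))]
        fun t => (u₁ (Set.Ioi t)).toReal - (u₂ (Set.Ioi t)).toReal :=
      (ae_restrict_iff' measurableSet_Ioi).mpr
        (Filter.Eventually.of_forall fun t ht => sub_nonneg.mpr (hdiff t ht))
    have hsub : Set.Ico a h ⊆ Set.Ioi (0:ℝ) := fun y hy => ha0.trans_le hy.1
    have step1 : (∫ t in Set.Ico a h, ((u₁ (Set.Ioi t)).toReal - (u₂ (Set.Ioi t)).toReal))
        ≤ ∫ t in Set.Ioi (0:ℝ), ((u₁ (Set.Ioi t)).toReal - (u₂ (Set.Ioi t)).toReal) :=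
      setIntegral_mono_set (hint₁.sub hint₂) hnnd (HasSubset.Subset.eventuallyLE hsub)
    have step2 : ε * (h - a)
        ≤ ∫ t in Set.Ico a h, ((u₁ (Set.Ioi t)).toReal - (u₂ (Set.Ioi t)).toReal) := by
      have hic : MeasureTheory.IntegrableOn (fun _ : ℝ => ε) (Set.Ico a h) :=
        (integrableOn_const_iff enorm_ne_top).mpr (Or.inr measure_Ico_lt_top)
      have := setIntegral_mono_on hic (MeasureTheory.IntegrableOn.mono_set (hint₁.sub hint₂) hsub)
        measurableSet_Ico hgap'
      rwa [setIntegral_const, Real.volume_real_Ico, smul_eq_mul,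
        max_eq_left (by linarith), mul_comm] at this
    linarith
  -- bounds on integrals
  have hI₁ : ∫ y, y ∂u₁ ≤ 1 := by
    calc ∫ y, y ∂u₁ ≤ ∫ _, (1:ℝ) ∂u₁ := by
          apply integral_mono_ae hid₁ (integrable_const 1)
          filter_upwards [hae₁] with y hy; exact hy.2
      _ = 1 := by simp
  have hI₂ : 0 ≤ ∫ y, y ∂u₂ := integral_nonneg_of_ae hnn₂
  have hε1 : ε ≤ 1 := by
    have h1 : (u₂ (Set.Icc 0 a)).toReal ≤ 1 := by
      calc (u₂ (Set.Icc 0 a)).toReal ≤ (1:ENNReal).toReal :=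
            ENNReal.toReal_mono ENNReal.one_ne_top prob_le_one
        _ = 1 := ENNReal.toReal_one
    have h0 : 0 ≤ (u₁ (Set.Icc 0 a)).toReal := ENNReal.toReal_nonneg
    linarith
  have hδ0 : 0 < ε * (h - a) := mul_pos hε (by linarith)
  have hδ1 : ε * (h - a) < 1 := by nlinarith
  constructor
  · rw [lt_div_iff₀ (by linarith)]; linarith
  · rw [div_mul_eq_mul_div, one_mul, div_le_iff₀ (by linarith)]
    nlinarith [mul_nonneg (sub_nonneg.mpr hI₁) hδ0.le]
end

section
/- Fix $b \in (0,1)$, a probability measure $Q$ on $[0,1]$ with $\int y\,Q(dy) > 0$, and $h \in (0,1]$. Define the map $T$ on probability measures $u$ on $[0,1]$ with positive mean by $T(u)(dx) = (1-b)\frac{x\,u(dx)}{\int y\,u(dy)} + b\,Q(dx)$. If $u, v$ are probability measures with positive mean, common essential supremum $h$, and $u(A) \le v(A)$ for every Borel $A \subseteq [0,h)$, then $T(u)(A) \le T(v)(A)$ for every Borel $A \subseteq [0,h)$, and $T(u)(\{h\}) \ge T(v)(\{h\})$. -/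
open MeasureTheory Set

/-- The one-step mutation-selection (Kingman) map: size-biasing with probability `1-b`
plus mutation to `Q` with probability `b`. -/
noncomputable def kingmanMap (b : ℝ) (Q u : Measure ℝ) : Measure ℝ :=
  u.withDensity (fun x => ENNReal.ofReal ((1 - b) * x / ∫ y, y ∂u))
    + ENNReal.ofReal b • Q


lemma ioi_null (w : Measure ℝ) [IsProbabilityMeasure w]
    (hsupp : w (Set.Icc (0:ℝ) 1)ᶜ = 0) (h : ℝ)
    (hS : sSup {x : ℝ | 0 < w (Set.Icc x 1)} = h) : w (Set.Ioi h) = 0 := by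
  have hzero : ∀ x, h < x → w (Set.Icc x 1) = 0 := by
    intro x hx
    by_contra hc
    have hpos : 0 < w (Set.Icc x 1) := lt_of_le_of_ne zero_le (Ne.symm hc)
    have hbdd : BddAbove {x : ℝ | 0 < w (Set.Icc x 1)} := by
      refine ⟨1, fun y hy => ?_⟩
      by_contra hy1
      push_neg at hy1
      have : Set.Icc y (1:ℝ) = ∅ := Set.Icc_eq_empty (by linarith)
      simp only [Set.mem_setOf_eq, this, measure_empty] at hy
      exact lt_irrefl 0 hy
    have := le_csSup hbdd (show x ∈ _ from hpos)
    rw [hS] at this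
    linarith
  have hsub : Set.Ioi h ⊆ (⋃ n : ℕ, Set.Icc (h + 1/(n+1)) 1) ∪ (Set.Icc (0:ℝ) 1)ᶜ := by
    intro y hy
    rcases le_or_gt y 1 with h1 | h1
    · left
      obtain ⟨n, hn⟩ := exists_nat_one_div_lt (sub_pos.2 (Set.mem_Ioi.1 hy))
      exact Set.mem_iUnion.2 ⟨n, ⟨by linarith, h1⟩⟩
    · right
      simp only [Set.mem_compl_iff, Set.mem_Icc, not_and, not_le]
      intro _; exact h1
  refine measure_mono_null hsub (measure_union_null ?_ hsupp)
  refine measure_iUnion_null fun n => hzero _ ?_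
  have : (0:ℝ) < 1/(n+1) := by positivity
  linarith

section main
variable (h : ℝ)

/-- Key real-analytic facts for one measure. -/
lemma mean_decomp (w : Measure ℝ) [IsProbabilityMeasure w]
    (hh0 : 0 < h)
    (hcompl : w (Set.Icc (0:ℝ) h)ᶜ = 0) :
    Integrable (fun y : ℝ => y) w ∧
    (w (Set.Ico 0 h)).toReal + (w {h}).toReal = 1 ∧
    (∫ y, y ∂w) = (∫ y in Set.Ico 0 h, y ∂w) + h * (w {h}).toReal := by
  have hae : ∀ᵐ y ∂w, y ∈ Set.Icc (0:ℝ) h := by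
    rw [ae_iff]
    convert hcompl using 2
    rfl
  have hint : Integrable (fun y : ℝ => y) w := by
    refine (integrable_const (max h 1)).mono' measurable_id.aestronglyMeasurable ?_
    filter_upwards [hae] with y hy
    rw [Real.norm_eq_abs, abs_le]
    constructor
    · nlinarith [hy.1, le_max_right h 1]
    · exact le_trans hy.2 (le_max_left _ _)
  refine ⟨hint, ?_, ?_⟩
  · have h1 : w (Set.Icc 0 h) = 1 := by
      have h2 := measure_add_measure_compl (μ := w) (measurableSet_Icc (a := (0:ℝ)) (b := h))
      rw [hcompl, add_zero, measure_univ] at h2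
      exact h2
    have h2 : w (Set.Ico 0 h) + w {h} = 1 := by
      rw [← measure_union (by simp [Set.disjoint_singleton_right]) (measurableSet_singleton h),
        Set.Ico_union_right hh0.le]
      exact h1
    have := congrArg ENNReal.toReal h2
    rwa [ENNReal.toReal_add (measure_ne_top _ _) (measure_ne_top _ _), ENNReal.toReal_one] at this
  · have haeq : (fun y : ℝ => y) =ᵐ[w]
        fun y => (Set.Ico (0:ℝ) h).indicator (fun y => y) y
          + ({h} : Set ℝ).indicator (fun y => y) y := by
      filter_upwards [hae] with y hy
      rcases eq_or_lt_of_le hy.2 with heq | hlt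
      · simp [Set.indicator_apply, Set.mem_Ico, heq]
      · simp [Set.indicator_apply, Set.mem_Ico, hy.1, hlt, ne_of_lt hlt]
    rw [integral_congr_ae haeq,
      integral_add (hint.indicator measurableSet_Ico) (hint.indicator (measurableSet_singleton h)),
      integral_indicator measurableSet_Ico, integral_indicator (measurableSet_singleton h)]
    congr 1
    rw [Measure.restrict_singleton, integral_smul_measure, integral_dirac]
    rw [smul_eq_mul, mul_comm]
end main

theorem stmt_5 (b : ℝ) (hb : b ∈ Set.Ioo (0:ℝ) 1) (Q : Measure ℝ)
    (hQ : IsProbabilityMeasure Q) (hQsupp : Q (Set.Icc (0:ℝ) 1)ᶜ = 0)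
    (hQmean : 0 < ∫ y, y ∂Q) (h : ℝ) (hh : h ∈ Set.Ioc (0:ℝ) 1)
    (u v : Measure ℝ)
    (hu : IsProbabilityMeasure u) (hv : IsProbabilityMeasure v)
    (husupp : u (Set.Icc (0:ℝ) 1)ᶜ = 0) (hvsupp : v (Set.Icc (0:ℝ) 1)ᶜ = 0)
    (humean : 0 < ∫ y, y ∂u) (hvmean : 0 < ∫ y, y ∂v)
    (hSu : sSup {x : ℝ | 0 < u (Set.Icc x 1)} = h)
    (hSv : sSup {x : ℝ | 0 < v (Set.Icc x 1)} = h)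
    (hle : ∀ A : Set ℝ, MeasurableSet A → A ⊆ Set.Ico 0 h → u A ≤ v A) :
    (∀ A : Set ℝ, MeasurableSet A → A ⊆ Set.Ico 0 h →
        kingmanMap b Q u A ≤ kingmanMap b Q v A)
      ∧ kingmanMap b Q v {h} ≤ kingmanMap b Q u {h} := by
  obtain ⟨hb0, hb1⟩ := hb
  obtain ⟨hh0, hh1⟩ := hh
  -- no mass outside [0,h]
  have hcompl : ∀ (w : Measure ℝ) [IsProbabilityMeasure w],
      w (Set.Icc (0:ℝ) 1)ᶜ = 0 → sSup {x : ℝ | 0 < w (Set.Icc x 1)} = h →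
      w (Set.Icc (0:ℝ) h)ᶜ = 0 := by
    intro w _ hsupp hS
    have hgt : w (Set.Ioi h) = 0 := ioi_null w hsupp h hS
    have hsub : (Set.Icc (0:ℝ) h)ᶜ ⊆ Set.Iio 0 ∪ Set.Ioi h := by
      intro y hy
      simp only [Set.mem_compl_iff, Set.mem_Icc, not_and, not_le] at hy
      rcases le_or_gt 0 y with h0 | h0
      · exact Or.inr (hy h0)
      · exact Or.inl h0
    refine measure_mono_null hsub (measure_union_null ?_ hgt)
    refine measure_mono_null (fun y hy => ?_) hsupp
    simp only [Set.mem_Iio] at hy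
    simp only [Set.mem_compl_iff, Set.mem_Icc, not_and, not_le]
    intro h0; linarith
  have hcu := hcompl u husupp hSu
  have hcv := hcompl v hvsupp hSv
  obtain ⟨hintu, hsumu, hdecu⟩ := mean_decomp h u hh0 hcu
  obtain ⟨hintv, hsumv, hdecv⟩ := mean_decomp h v hh0 hcv
  set mu := ∫ y, y ∂u with hmu_def
  set mv := ∫ y, y ∂v with hmv_def
  set au := ∫ y in Set.Ico 0 h, y ∂u with hau_def
  set av := ∫ y in Set.Ico 0 h, y ∂v with hav_def
  set cu := (u (Set.Ico 0 h)).toReal with hcu_def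
  set cv := (v (Set.Ico 0 h)).toReal with hcv_def
  set pu := (u {h}).toReal with hpu_def
  set pv := (v {h}).toReal with hpv_def
  have hres : u.restrict (Set.Ico 0 h) ≤ v.restrict (Set.Ico 0 h) := by
    refine Measure.le_iff.2 fun s hs => ?_
    rw [Measure.restrict_apply hs, Measure.restrict_apply hs]
    exact hle _ (hs.inter measurableSet_Ico) Set.inter_subset_right
  have hau_nonneg : 0 ≤ au :=
    setIntegral_nonneg measurableSet_Ico fun y hy => hy.1
  have hau_le : au ≤ av := by
    refine integral_mono_measure hres ?_ hintv.integrableOn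
    filter_upwards [ae_restrict_mem measurableSet_Ico] with y hy
    exact hy.1
  have hkey : cu * h - au ≤ cv * h - av := by
    have h1 : ∫ y in Set.Ico 0 h, (h - y) ∂u ≤ ∫ y in Set.Ico 0 h, (h - y) ∂v := by
      refine integral_mono_measure hres ?_ ((integrable_const h).sub hintv.integrableOn)
      filter_upwards [ae_restrict_mem measurableSet_Ico] with y hy
      exact sub_nonneg.2 hy.2.le
    rw [integral_sub (integrable_const h) hintu.integrableOn,
      integral_sub (integrable_const h) hintv.integrableOn,
      setIntegral_const, setIntegral_const, smul_eq_mul, smul_eq_mul] at h1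
    exact h1
  have hcu_le : cu ≤ cv :=
    ENNReal.toReal_mono (measure_ne_top _ _) (hle _ measurableSet_Ico subset_rfl)
  have hpv_le : pv ≤ pu := by linarith
  have hpv_nonneg : 0 ≤ pv := ENNReal.toReal_nonneg
  have hpu_nonneg : 0 ≤ pu := ENNReal.toReal_nonneg
  have hm : mv ≤ mu := by
    rw [hdecu, hdecv]
    nlinarith
  have hprod : pv * mu ≤ pu * mv := by
    rw [hdecu, hdecv]
    nlinarith [mul_le_mul hpv_le hau_le hau_nonneg hpu_nonneg]
  constructor
  · intro A hA hAsub
    simp only [kingmanMap, Measure.add_apply, Measure.smul_apply, smul_eq_mul]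
    rw [withDensity_apply _ hA, withDensity_apply _ hA]
    refine add_le_add ?_ le_rfl
    have hresA : u.restrict A ≤ v.restrict A := by
      refine Measure.le_iff.2 fun s hs => ?_
      rw [Measure.restrict_apply hs, Measure.restrict_apply hs]
      exact hle _ (hs.inter hA) (Set.inter_subset_right.trans hAsub)
    calc ∫⁻ x in A, ENNReal.ofReal ((1 - b) * x / mu) ∂u
        ≤ ∫⁻ x in A, ENNReal.ofReal ((1 - b) * x / mv) ∂u := by
          refine lintegral_mono_ae ?_
          filter_upwards [ae_restrict_mem hA] with x hx
          have hx0 : 0 ≤ x := (hAsub hx).1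
          refine ENNReal.ofReal_le_ofReal ?_
          exact div_le_div_of_nonneg_left (by nlinarith) hvmean hm
          |>.trans le_rfl
      _ ≤ ∫⁻ x in A, ENNReal.ofReal ((1 - b) * x / mv) ∂v :=
          lintegral_mono' hresA le_rfl
  · simp only [kingmanMap, Measure.add_apply, Measure.smul_apply, smul_eq_mul]
    rw [withDensity_apply _ (measurableSet_singleton h),
      withDensity_apply _ (measurableSet_singleton h)]
    refine add_le_add ?_ le_rfl
    rw [Measure.restrict_singleton, Measure.restrict_singleton,
      lintegral_smul_measure, lintegral_smul_measure, lintegral_dirac, lintegral_dirac]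
    rw [smul_eq_mul, smul_eq_mul, ← ENNReal.ofReal_toReal (measure_ne_top v {h}),
      ← ENNReal.ofReal_toReal (measure_ne_top u {h}),
      ← ENNReal.ofReal_mul ENNReal.toReal_nonneg,
      ← ENNReal.ofReal_mul ENNReal.toReal_nonneg]
    refine ENNReal.ofReal_le_ofReal ?_
    rw [← hpu_def, ← hpv_def, mul_div_assoc', mul_div_assoc',
      div_le_div_iff₀ hvmean humean]
    have hc : (0:ℝ) ≤ (1 - b) * h := by nlinarith
    calc pv * ((1 - b) * h) * mu = (1 - b) * h * (pv * mu) := by ring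
      _ ≤ (1 - b) * h * (pu * mv) := mul_le_mul_of_nonneg_left hprod hc
      _ = pu * ((1 - b) * h) * mv := by ring
end

section
/- Let $b \in (0,1)$, $h \in (0,1]$, and $Q$ a probability measure on $[0,1]$ supported in $[0,h]$ with $\int \frac{Q(dx)}{1-x/h} < b^{-1}$ (in particular the integral is finite, which forces $Q(\{h\}) = 0$). Define $\mathcal{K}(dx) = \frac{b\,Q(dx)}{1 - x/h} + \Big(1 - \int \frac{b\,Q(dy)}{1-y/h}\Big)\delta_h(dx)$. Then $\mathcal{K}$ is a probability measure with $\mathcal{K}(\{h\}) > 0$, its mean is $\int x\,\mathcal{K}(dx) = (1-b)h$, and $\mathcal{K}$ is a fixed point of the Kingman map: $\mathcal{K}(dx) = (1-b)\frac{x\,\mathcal{K}(dx)}{\int y\,\mathcal{K}(dy)} + b\,Q(dx)$. -/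
open MeasureTheory Set
open scoped ENNReal

lemma withDensity_dirac_aux {f : ℝ → ℝ≥0∞} (hf : Measurable f) (a : ℝ) :
    (MeasureTheory.Measure.dirac a).withDensity f = f a • MeasureTheory.Measure.dirac a := by
  classical
  ext s hs
  rw [withDensity_apply _ hs, Measure.smul_apply, smul_eq_mul,
    Measure.dirac_apply' _ hs, setLIntegral_dirac' hf hs]
  by_cases h : a ∈ s <;> simp [h]

theorem stmt_8 (b h : ℝ) (hb : b ∈ Set.Ioo (0:ℝ) 1) (hh : h ∈ Set.Ioc (0:ℝ) 1)
    (Q : Measure ℝ) (hQ : IsProbabilityMeasure Q)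
    (hQsupp : Q (Set.Icc (0:ℝ) h)ᶜ = 0)
    (hint : ∫⁻ x, (ENNReal.ofReal (1 - x / h))⁻¹ ∂Q < ENNReal.ofReal b⁻¹) :
    IsProbabilityMeasure
        (Q.withDensity (fun x => ENNReal.ofReal b * (ENNReal.ofReal (1 - x / h))⁻¹)
          + (1 - ENNReal.ofReal b * ∫⁻ y, (ENNReal.ofReal (1 - y / h))⁻¹ ∂Q) • Measure.dirac h)
      ∧ 0 < (Q.withDensity (fun x => ENNReal.ofReal b * (ENNReal.ofReal (1 - x / h))⁻¹)
          + (1 - ENNReal.ofReal b * ∫⁻ y, (ENNReal.ofReal (1 - y / h))⁻¹ ∂Q) • Measure.dirac h) {h}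
      ∧ (∫ x, x ∂(Q.withDensity (fun x => ENNReal.ofReal b * (ENNReal.ofReal (1 - x / h))⁻¹)
          + (1 - ENNReal.ofReal b * ∫⁻ y, (ENNReal.ofReal (1 - y / h))⁻¹ ∂Q) • Measure.dirac h))
          = (1 - b) * h
      ∧ (Q.withDensity (fun x => ENNReal.ofReal b * (ENNReal.ofReal (1 - x / h))⁻¹)
          + (1 - ENNReal.ofReal b * ∫⁻ y, (ENNReal.ofReal (1 - y / h))⁻¹ ∂Q) • Measure.dirac h)
        = kingmanMap b Q
            (Q.withDensity (fun x => ENNReal.ofReal b * (ENNReal.ofReal (1 - x / h))⁻¹)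
              + (1 - ENNReal.ofReal b * ∫⁻ y, (ENNReal.ofReal (1 - y / h))⁻¹ ∂Q) • Measure.dirac h) := by
  obtain ⟨hb0, hb1⟩ := hb
  obtain ⟨hh0, hh1⟩ := hh
  set g : ℝ → ℝ≥0∞ := fun x => ENNReal.ofReal b * (ENNReal.ofReal (1 - x / h))⁻¹ with hg_def
  set I : ℝ≥0∞ := ∫⁻ y, (ENNReal.ofReal (1 - y / h))⁻¹ ∂Q with hI_def
  set c : ℝ≥0∞ := 1 - ENNReal.ofReal b * I with hc_def
  set K : Measure ℝ := Q.withDensity g + c • Measure.dirac h with hK_def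
  have hmeas0 : Measurable fun x : ℝ => (ENNReal.ofReal (1 - x / h))⁻¹ :=
    (((measurable_id.div_const h).const_sub 1).ennreal_ofReal).inv
  have hg_meas : Measurable g := measurable_const.mul hmeas0
  -- I is finite
  have hI_lt_top : I < ⊤ := lt_of_lt_of_le hint le_top
  -- bI < 1
  have hbI_lt_one : ENNReal.ofReal b * I < 1 := by
    calc ENNReal.ofReal b * I < ENNReal.ofReal b * ENNReal.ofReal b⁻¹ := by
          refine ENNReal.mul_lt_mul_right (by simp [hb0]) (by simp) ?_
          exact hint
      _ = 1 := by
          rw [← ENNReal.ofReal_mul hb0.le, mul_inv_cancel₀ hb0.ne', ENNReal.ofReal_one]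
  have hbI_ne_top : ENNReal.ofReal b * I ≠ ⊤ := (hbI_lt_one.trans_le le_top).ne
  have hc_pos : 0 < c := tsub_pos_of_lt hbI_lt_one
  have hc_le_one : c ≤ 1 := tsub_le_self
  have hc_ne_top : c ≠ ⊤ := (hc_le_one.trans_lt (by simp)).ne
  -- a.e. facts
  have hae : ∀ᵐ x ∂Q, 0 ≤ x ∧ x < h := by
    have h1 : ∀ᵐ x ∂Q, x ∈ Icc (0:ℝ) h := by
      rw [ae_iff]
      have : {x : ℝ | ¬ x ∈ Icc (0:ℝ) h} = (Icc (0:ℝ) h)ᶜ := rfl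
      rw [this]; exact hQsupp
    have h2 : ∀ᵐ x ∂Q, (ENNReal.ofReal (1 - x / h))⁻¹ < ⊤ :=
      ae_lt_top hmeas0 hI_lt_top.ne
    filter_upwards [h1, h2] with x hx1 hx2
    refine ⟨hx1.1, ?_⟩
    rw [ENNReal.inv_lt_top, ENNReal.ofReal_pos, sub_pos] at hx2
    exact (div_lt_one hh0).mp hx2
  -- pointwise identity for the mean
  have hmean_ae : ∀ᵐ x ∂Q,
      g x * ENNReal.ofReal x + ENNReal.ofReal (b * h)
        = ENNReal.ofReal (b * h) * (ENNReal.ofReal (1 - x / h))⁻¹ := by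
    filter_upwards [hae] with x ⟨hx0, hxh⟩
    have ht : (0:ℝ) < 1 - x / h := by
      rw [sub_pos]; exact (div_lt_one hh0).mpr hxh
    simp only [hg_def]
    rw [← ENNReal.ofReal_inv_of_pos ht, ← ENNReal.ofReal_mul hb0.le,
      ← ENNReal.ofReal_mul (by positivity), ← ENNReal.ofReal_mul (by positivity),
      ← ENNReal.ofReal_add (by positivity) (by positivity)]
    congr 1
    have hhx : h - x ≠ 0 := by linarith
    field_simp
    ring
  -- J := lintegral of g x * x
  set J : ℝ≥0∞ := ∫⁻ x, g x * ENNReal.ofReal x ∂Q with hJ_def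
  have hJ_eq : J + ENNReal.ofReal (b * h) = ENNReal.ofReal (b * h) * I := by
    have h1 : ∫⁻ x, (g x * ENNReal.ofReal x + ENNReal.ofReal (b * h)) ∂Q
        = ENNReal.ofReal (b * h) * I := by
      rw [lintegral_congr_ae hmean_ae, lintegral_const_mul _ hmeas0, ← hI_def]
    rw [lintegral_add_right _ measurable_const, lintegral_const, measure_univ, mul_one] at h1
    exact h1
  have hJ_ne_top : J ≠ ⊤ := by
    refine (lt_of_le_of_lt (le_trans le_self_add hJ_eq.le) ?_).ne
    exact ENNReal.mul_lt_top ENNReal.ofReal_lt_top hI_lt_top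
  -- real versions
  set Ir : ℝ := I.toReal with hIr_def
  have hIval : I = ENNReal.ofReal Ir := by
    rw [hIr_def, ENNReal.ofReal_toReal hI_lt_top.ne]
  have hIr_nonneg : 0 ≤ Ir := ENNReal.toReal_nonneg
  have hc_toReal : c.toReal = 1 - b * Ir := by
    rw [hc_def, ENNReal.toReal_sub_of_le hbI_lt_one.le (by simp), ENNReal.toReal_mul,
      ENNReal.toReal_ofReal hb0.le, ENNReal.toReal_one]
  have hJ_toReal : J.toReal = b * h * Ir - b * h := by
    have := congrArg ENNReal.toReal hJ_eq
    rw [ENNReal.toReal_add hJ_ne_top (by simp), ENNReal.toReal_mul,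
      ENNReal.toReal_ofReal (by positivity)] at this
    linarith
  -- part 1 : probability measure
  have hKuniv : K univ = 1 := by
    rw [hK_def, Measure.add_apply, withDensity_apply _ MeasurableSet.univ,
      Measure.restrict_univ, Measure.smul_apply, smul_eq_mul]
    have h1 : ∫⁻ x, g x ∂Q = ENNReal.ofReal b * I := by
      rw [hg_def, hI_def]; exact lintegral_const_mul _ hmeas0
    rw [h1, Measure.dirac_apply_of_mem (mem_univ h), mul_one, hc_def]
    rw [add_comm, tsub_add_cancel_of_le hbI_lt_one.le]
  have hprob : IsProbabilityMeasure K := ⟨hKuniv⟩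
  -- part 2 : positive mass at h
  have hpos : 0 < K {h} := by
    rw [hK_def, Measure.add_apply, Measure.smul_apply, smul_eq_mul,
      Measure.dirac_apply_of_mem (mem_singleton h), mul_one]
    exact lt_of_lt_of_le hc_pos le_add_self
  -- part 3 : the mean
  have hKae_nonneg : ∀ᵐ x ∂K, 0 ≤ x := by
    rw [hK_def, ae_add_measure_iff]
    constructor
    · exact (withDensity_absolutelyContinuous Q g).ae_le
        (hae.mono fun x hx => hx.1)
    · rw [Measure.ae_ennreal_smul_measure_iff hc_pos.ne']
      exact (ae_dirac_iff (by exact measurableSet_le measurable_const measurable_id)).mpr hh0.le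
  have hmean : ∫ x, x ∂K = (1 - b) * h := by
    rw [integral_eq_lintegral_of_nonneg_ae hKae_nonneg measurable_id.aestronglyMeasurable]
    have hlin : ∫⁻ x, ENNReal.ofReal x ∂K = J + c * ENNReal.ofReal h := by
      rw [hK_def, lintegral_add_measure, lintegral_smul_measure,
        lintegral_withDensity_eq_lintegral_mul Q hg_meas ENNReal.measurable_ofReal,
        lintegral_dirac]
      rfl
    rw [hlin, ENNReal.toReal_add hJ_ne_top (ENNReal.mul_ne_top hc_ne_top (by simp)),
      ENNReal.toReal_mul, ENNReal.toReal_ofReal hh0.le, hJ_toReal, hc_toReal]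
    ring
  refine ⟨hprob, hpos, hmean, ?_⟩
  -- part 4 : fixed point
  have hdens : (fun x => ENNReal.ofReal ((1 - b) * x / ∫ y, y ∂K))
      = fun x => ENNReal.ofReal (x / h) := by
    funext x
    rw [hmean, mul_div_mul_left x h (by linarith : (1:ℝ) - b ≠ 0)]
  have hD_meas : Measurable fun x : ℝ => ENNReal.ofReal (x / h) :=
    (measurable_id.div_const h).ennreal_ofReal
  rw [kingmanMap, hdens]
  rw [hK_def, withDensity_add_measure, withDensity_smul_measure,
    withDensity_dirac_aux hD_meas h, div_self hh0.ne', ENNReal.ofReal_one, one_smul,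
    ← withDensity_mul Q hg_meas hD_meas, ← withDensity_const (μ := Q) (ENNReal.ofReal b)]
  have hae_fix : (fun x => g x * ENNReal.ofReal (x / h)) + (fun _ => ENNReal.ofReal b)
      =ᵐ[Q] g := by
    filter_upwards [hae] with x ⟨hx0, hxh⟩
    have ht : (0:ℝ) < 1 - x / h := by
      rw [sub_pos]; exact (div_lt_one hh0).mpr hxh
    simp only [Pi.add_apply, hg_def]
    rw [← ENNReal.ofReal_inv_of_pos ht, ← ENNReal.ofReal_mul hb0.le,
      ← ENNReal.ofReal_mul (by positivity), ← ENNReal.ofReal_add (by positivity) hb0.le]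
    congr 1
    have hhx : h - x ≠ 0 := by linarith
    field_simp
    ring
  calc Q.withDensity g + c • Measure.dirac h
      = Q.withDensity ((fun x => g x * ENNReal.ofReal (x / h)) + fun _ => ENNReal.ofReal b)
        + c • Measure.dirac h := by rw [withDensity_congr_ae hae_fix]
    _ = (Q.withDensity (fun x => g x * ENNReal.ofReal (x / h))
          + Q.withDensity (fun _ => ENNReal.ofReal b)) + c • Measure.dirac h := by
        rw [withDensity_add_left (f := fun x => g x * ENNReal.ofReal (x / h)) (hg_meas.mul hD_meas)]
    _ = Q.withDensity (fun x => g x * ENNReal.ofReal (x / h)) + c • Measure.dirac h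
          + Q.withDensity (fun _ => ENNReal.ofReal b) := by
        rw [add_assoc, add_comm (Q.withDensity fun _ => ENNReal.ofReal b), ← add_assoc]
end

section
/- (Kingman case 1, sign of the growth rate.) Let $b \in (0,1)$, $h \in (0,1]$, and $Q$ a probability measure supported in $[0,h]$ with $Q \ne \delta_0$, and suppose $\theta_b > (1-b)S_Q$ solves $\int\frac{b\theta_b Q(dx)}{\theta_b-(1-b)x} = 1$. If $\int \frac{Q(dx)}{1-x/h} \ge b^{-1}$ (with the convention that the integral is $+\infty$ if $Q(\{h\})>0$), then $h(1-b) \le \theta_b$, i.e. $\ln\frac{h(1-b)}{\int x\,\mathcal{K}_Q(dx)} \le 0$ where $\mathcal{K}_Q(dx) = \frac{b\theta_b Q(dx)}{\theta_b-(1-b)x}$; moreover equality $h(1-b) = \theta_b$ holds if and only if $\int \frac{Q(dx)}{1-x/h} = b^{-1}$. -/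
open MeasureTheory Set ENNReal

private lemma div_mono_aux {θ1 θ2 c : ℝ} (hc : 0 ≤ c) (h1 : c < θ1) (h12 : θ1 ≤ θ2) :
    θ2 / (θ2 - c) ≤ θ1 / (θ1 - c) := by
  rw [div_le_div_iff₀ (by linarith) (by linarith)]
  nlinarith

private lemma div_strict_aux {θ1 θ2 c : ℝ} (hc : 0 < c) (h1 : c < θ1) (h12 : θ1 < θ2) :
    θ2 / (θ2 - c) < θ1 / (θ1 - c) := by
  rw [div_lt_div_iff₀ (by linarith) (by linarith)]
  nlinarith

private lemma lintegral_lt_of_ae_le {μ : Measure ℝ} {F G : ℝ → ℝ≥0∞}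
    (hF : Measurable F) (hG : Measurable G)
    (hle : ∀ᵐ x ∂μ, G x ≤ F x) (hfin : ∫⁻ x, F x ∂μ ≠ ⊤)
    (hpos : μ {x | G x < F x} ≠ 0) :
    ∫⁻ x, G x ∂μ < ∫⁻ x, F x ∂μ := by
  have key : ∫⁻ x, F x ∂μ = ∫⁻ x, G x ∂μ + ∫⁻ x, (F x - G x) ∂μ := by
    rw [← lintegral_add_left hG]
    refine lintegral_congr_ae ?_
    filter_upwards [hle] with x hx
    exact (add_tsub_cancel_of_le hx).symm
  have hGfin : ∫⁻ x, G x ∂μ ≠ ⊤ := ne_top_of_le_ne_top hfin (lintegral_mono_ae hle)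
  have hsub : ∫⁻ x, (F x - G x) ∂μ ≠ 0 := by
    intro h0
    have h1 := (lintegral_eq_zero_iff (hF.sub hG)).mp h0
    have h2 : ∀ᵐ x ∂μ, ¬ (G x < F x) := by
      filter_upwards [h1] with x hx
      simp only [Pi.zero_apply] at hx
      exact not_lt.mpr (tsub_eq_zero_iff_le.mp hx)
    rw [ae_iff] at h2
    simp only [not_not] at h2
    exact hpos h2
  rw [key]
  exact ENNReal.lt_add_right hGfin hsub

theorem stmt_10 (b h : ℝ) (hb : b ∈ Set.Ioo (0:ℝ) 1) (hh : h ∈ Set.Ioc (0:ℝ) 1)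
    (Q : Measure ℝ) (hQ : IsProbabilityMeasure Q)
    (hQsupp : Q (Set.Icc (0:ℝ) h)ᶜ = 0) (hQne : Q ≠ Measure.dirac 0)
    (S : ℝ) (hS : sSup {x : ℝ | 0 < Q (Set.Icc x 1)} = S)
    (θb : ℝ) (hθ : (1 - b) * S < θb)
    (hsol : (∫ x, b * θb / (θb - (1 - b) * x) ∂Q) = 1)
    (hcond : ENNReal.ofReal b⁻¹ ≤ ∫⁻ x, (ENNReal.ofReal (1 - x / h))⁻¹ ∂Q) :
    h * (1 - b) ≤ θb
      ∧ Real.log (h * (1 - b) / θb) ≤ 0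
      ∧ (h * (1 - b) = θb
          ↔ (∫⁻ x, (ENNReal.ofReal (1 - x / h))⁻¹ ∂Q) = ENNReal.ofReal b⁻¹) := by
  obtain ⟨hb0, hb1⟩ := hb
  obtain ⟨hh0, hh1⟩ := hh
  set T := {x : ℝ | 0 < Q (Set.Icc x 1)} with hT
  -- basic measure facts
  have hQIcc : Q (Set.Icc 0 h) = 1 := by
    have h1 : Q (Set.Icc 0 h) + Q (Set.Icc 0 h)ᶜ = Q univ :=
      measure_add_measure_compl measurableSet_Icc
    rw [hQsupp, add_zero, measure_univ] at h1
    exact h1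
  have hT0 : (0:ℝ) ∈ T := by
    have h2 : Q (Set.Icc 0 h) ≤ Q (Set.Icc (0:ℝ) 1) := measure_mono (Icc_subset_Icc le_rfl hh1)
    rw [hQIcc] at h2
    exact lt_of_lt_of_le zero_lt_one h2
  have hTbdd : ∀ x ∈ T, x ≤ h := by
    intro x hx
    by_contra hxh
    push_neg at hxh
    have hsub : Set.Icc x 1 ⊆ (Set.Icc (0:ℝ) h)ᶜ := by
      intro y hy hy2
      exact absurd (le_trans hy.1 hy2.2) (not_le.mpr hxh)
    have : Q (Set.Icc x 1) = 0 := measure_mono_null hsub hQsupp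
    rw [hT, mem_setOf_eq, this] at hx
    exact lt_irrefl 0 hx
  have hSh : S ≤ h := hS ▸ csSup_le ⟨0, hT0⟩ hTbdd
  have hS0 : 0 ≤ S := hS ▸ le_csSup ⟨h, hTbdd⟩ hT0
  have hae_mem : ∀ᵐ x ∂Q, x ∈ Set.Icc 0 h := mem_ae_iff.mpr hQsupp
  have hae_leS : ∀ᵐ x ∂Q, x ≤ S := by
    rw [ae_iff]
    simp only [not_le]
    have cover : {x : ℝ | S < x} ⊆ ⋃ q : ℚ, {x : ℝ | S < (q:ℝ) ∧ (q:ℝ) ≤ x} := by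
      intro x hx
      obtain ⟨q, hq1, hq2⟩ := exists_rat_btwn (show S < x from hx)
      exact mem_iUnion.mpr ⟨q, hq1, hq2.le⟩
    refine measure_mono_null cover (measure_iUnion_null fun q => ?_)
    by_cases hq : S < (q:ℝ)
    · have hqT : (q:ℝ) ∉ T := fun hqT =>
        absurd (hS ▸ le_csSup ⟨h, hTbdd⟩ hqT) (not_le.mpr hq)
      have hq0 : Q (Set.Icc (q:ℝ) 1) = 0 := by
        rw [hT, mem_setOf_eq, not_lt, le_zero_iff] at hqT
        exact hqT
      refine measure_mono_null (fun x hx => ?_) (measure_union_null hq0 hQsupp)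
      by_cases hm : x ∈ Set.Icc (0:ℝ) h
      · exact Or.inl ⟨hx.2, le_trans hm.2 hh1⟩
      · exact Or.inr hm
    · have : {x : ℝ | S < (q:ℝ) ∧ (q:ℝ) ≤ x} = ∅ := by
        ext x; simp [hq]
      rw [this]; exact measure_empty
  have hne0 : Q ({0}ᶜ : Set ℝ) ≠ 0 := by
    intro h0
    apply hQne
    ext s hs
    rw [Measure.dirac_apply' _ hs]
    by_cases h0s : (0:ℝ) ∈ s
    · rw [Set.indicator_of_mem h0s]
      have hsc : Q sᶜ = 0 :=
        measure_mono_null (fun x hx => fun (hx0 : x ∈ ({0}:Set ℝ)) => hx (hx0 ▸ h0s)) h0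
      have h1 : Q s + Q sᶜ = Q univ := measure_add_measure_compl hs
      rw [hsc, add_zero, measure_univ] at h1
      simpa using h1
    · rw [Set.indicator_of_notMem h0s]
      exact measure_mono_null (fun x hx (hx0 : x ∈ ({0}:Set ℝ)) => h0s (hx0 ▸ hx)) h0
  have hSpos : 0 < S := by
    by_contra hS0'
    push_neg at hS0'
    apply hne0
    have hae0 : ∀ᵐ x ∂Q, x = 0 := by
      filter_upwards [hae_mem, hae_leS] with x hx hxS
      exact le_antisymm (hxS.trans hS0') hx.1
    rw [ae_iff] at hae0
    have hcompl : ({0}ᶜ : Set ℝ) = {x : ℝ | ¬ x = 0} := by ext x; simp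
    rw [hcompl]
    exact hae0
  have hθ0 : 0 < θb := lt_of_le_of_lt (mul_nonneg (by linarith) hS0) hθ
  have hθS : 0 < θb - (1 - b) * S := by linarith
  set f : ℝ → ℝ := fun x => θb / (θb - (1 - b) * x) with hf
  have hfmeas : Measurable f :=
    measurable_const.div (measurable_const.sub (measurable_id'.const_mul (1 - b)))
  have hf_bdd : ∀ᵐ x ∂Q, ‖f x‖ ≤ θb / (θb - (1 - b) * S) := by
    filter_upwards [hae_mem, hae_leS] with x hx hxS
    have hd : θb - (1 - b) * S ≤ θb - (1 - b) * x := by nlinarith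
    have hdx : 0 < θb - (1 - b) * x := lt_of_lt_of_le hθS hd
    rw [Real.norm_eq_abs, abs_of_pos (div_pos hθ0 hdx)]
    exact div_le_div_of_nonneg_left hθ0.le hθS hd
  have hfint : Integrable f Q :=
    Integrable.mono' (integrable_const _) hfmeas.aestronglyMeasurable hf_bdd
  have hf_nonneg : ∀ᵐ x ∂Q, 0 ≤ f x := by
    filter_upwards [hae_mem, hae_leS] with x hx hxS
    have hdx : 0 < θb - (1 - b) * x := by nlinarith
    exact (div_pos hθ0 hdx).le
  have hf_int_val : ∫ x, f x ∂Q = b⁻¹ := by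
    have h1 : ∫ x, b * θb / (θb - (1 - b) * x) ∂Q = b * ∫ x, f x ∂Q := by
      rw [← integral_const_mul]
      congr 1
      funext x
      rw [hf, mul_div_assoc]
    rw [h1] at hsol
    exact (inv_eq_of_mul_eq_one_right hsol).symm
  set F : ℝ → ℝ≥0∞ := fun x => ENNReal.ofReal (f x) with hFdef
  set G : ℝ → ℝ≥0∞ := fun x => (ENNReal.ofReal (1 - x / h))⁻¹ with hGdef
  have hFmeas : Measurable F := hfmeas.ennreal_ofReal
  have hGmeas : Measurable G :=
    ((measurable_const.sub (measurable_id'.div_const h)).ennreal_ofReal).inv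
  have hFlint : ∫⁻ x, F x ∂Q = ENNReal.ofReal b⁻¹ := by
    rw [← hf_int_val]
    exact (ofReal_integral_eq_lintegral_ofReal hfint hf_nonneg).symm
  have hFfin : ∫⁻ x, F x ∂Q ≠ ⊤ := by rw [hFlint]; exact ENNReal.ofReal_ne_top
  have hQpos : Q {x : ℝ | 0 < x} ≠ 0 := by
    intro hz
    apply hne0
    have hneg : Q {x : ℝ | x < 0} = 0 := by
      refine measure_mono_null ?_ hQsupp
      intro x hx hmem
      exact absurd hmem.1 (not_le.mpr hx)
    refine measure_mono_null (fun x hx => ?_) (measure_union_null hz hneg)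
    rcases lt_trichotomy 0 x with h1 | h1 | h1
    · exact Or.inl h1
    · exact absurd h1 (fun hc => hx hc.symm)
    · exact Or.inr h1
  -- pointwise identity for G when x < h
  have hGval : ∀ x : ℝ, 0 ≤ x → x < h →
      G x = ENNReal.ofReal (h * (1 - b) / (h * (1 - b) - (1 - b) * x)) := by
    intro x hx0 hxh
    have h1pos : 0 < 1 - x / h := by
      rw [sub_pos, div_lt_one hh0]; exact hxh
    have hgx : (1 - x / h)⁻¹ = h * (1 - b) / (h * (1 - b) - (1 - b) * x) := by
      have hd : h * (1 - b) - (1 - b) * x = (1 - b) * (h - x) := by ring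
      rw [hd]
      rw [inv_eq_one_div, div_eq_div_iff (by linarith) (by nlinarith)]
      field_simp
    rw [hGdef]
    simp only
    rw [← ENNReal.ofReal_inv_of_pos h1pos, hgx]
  -- Part 1
  have hmain : h * (1 - b) ≤ θb := by
    by_contra hlt
    push_neg at hlt
    have hle : ∀ᵐ x ∂Q, G x ≤ F x := by
      filter_upwards [hae_mem, hae_leS] with x hx hxS
      have hc : (1 - b) * x < θb := by nlinarith
      have hxh : x < h := by nlinarith
      rw [hGval x hx.1 hxh]
      exact ENNReal.ofReal_le_ofReal (div_mono_aux (mul_nonneg (by linarith) hx.1) hc hlt.le)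
    have hstrict : ∀ᵐ x ∂Q, 0 < x → G x < F x := by
      filter_upwards [hae_mem, hae_leS] with x hx hxS hx0
      have hc : (1 - b) * x < θb := by nlinarith
      have hxh : x < h := by nlinarith
      rw [hGval x hx.1 hxh]
      have hd : h * (1 - b) / (h * (1 - b) - (1 - b) * x) < θb / (θb - (1 - b) * x) :=
        div_strict_aux (mul_pos (by linarith) hx0) hc hlt
      exact (ENNReal.ofReal_lt_ofReal_iff (div_pos hθ0 (by linarith))).mpr hd
    have hset : Q {x | G x < F x} ≠ 0 := by
      intro h0
      apply hQpos
      have h1 : ∀ᵐ x ∂Q, ¬ (G x < F x) := by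
        rw [ae_iff]; simpa using h0
      have h2 : ∀ᵐ x ∂Q, ¬ (0 < x) := by
        filter_upwards [hstrict, h1] with x hx1 hx2 hx3
        exact hx2 (hx1 hx3)
      rw [ae_iff] at h2
      simpa using h2
    have hlt2 := lintegral_lt_of_ae_le hFmeas hGmeas hle hFfin hset
    rw [hFlint] at hlt2
    exact absurd hcond (not_le.mpr hlt2)
  refine ⟨hmain, ?_, ?_⟩
  · exact Real.log_nonpos (div_nonneg (mul_nonneg hh0.le (by linarith)) hθ0.le) ((div_le_one hθ0).mpr hmain)
  constructor
  · intro heqθ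
    have hcong : ∀ᵐ x ∂Q, G x = F x := by
      filter_upwards [hae_mem, hae_leS] with x hx hxS
      have hc : (1 - b) * x < θb := by nlinarith
      have hxh : x < h := by nlinarith
      rw [hGval x hx.1 hxh, heqθ]
    rw [← hFlint]
    exact lintegral_congr_ae hcong
  · intro heq
    by_contra hne
    have hlt : h * (1 - b) < θb := lt_of_le_of_ne hmain hne
    have hle : ∀ᵐ x ∂Q, F x ≤ G x := by
      filter_upwards [hae_mem, hae_leS] with x hx hxS
      by_cases hxh : x < h
      · rw [hGval x hx.1 hxh]
        have hc : (1 - b) * x < h * (1 - b) := by nlinarith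
        exact ENNReal.ofReal_le_ofReal (div_mono_aux (mul_nonneg (by linarith) hx.1) hc hlt.le)
      · have hxeq : x = h := le_antisymm hx.2 (not_lt.mp hxh)
        have : G x = ⊤ := by
          rw [hGdef]
          simp [hxeq, div_self hh0.ne']
        rw [this]
        exact le_top
    have hstrict : ∀ᵐ x ∂Q, 0 < x → F x < G x := by
      filter_upwards [hae_mem, hae_leS] with x hx hxS hx0
      by_cases hxh : x < h
      · rw [hGval x hx.1 hxh]
        have hc : (1 - b) * x < h * (1 - b) := by nlinarith
        have hd : θb / (θb - (1 - b) * x) < h * (1 - b) / (h * (1 - b) - (1 - b) * x) :=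
          div_strict_aux (mul_pos (by linarith) hx0) hc hlt
        have hfdpos : 0 < h * (1 - b) - (1 - b) * x := by linarith
        exact (ENNReal.ofReal_lt_ofReal_iff (div_pos (mul_pos hh0 (by linarith)) hfdpos)).mpr hd
      · have hxeq : x = h := le_antisymm hx.2 (not_lt.mp hxh)
        have hGtop : G x = ⊤ := by
          rw [hGdef]
          simp [hxeq, div_self hh0.ne']
        rw [hGtop]
        exact ENNReal.ofReal_lt_top
    have hGfin : ∫⁻ x, G x ∂Q ≠ ⊤ := by rw [heq]; exact ENNReal.ofReal_ne_top
    have hset : Q {x | F x < G x} ≠ 0 := by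
      intro h0
      apply hQpos
      have h1 : ∀ᵐ x ∂Q, ¬ (F x < G x) := by
        rw [ae_iff]; simpa using h0
      have h2 : ∀ᵐ x ∂Q, ¬ (0 < x) := by
        filter_upwards [hstrict, h1] with x hx1 hx2 hx3
        exact hx2 (hx1 hx3)
      rw [ae_iff] at h2
      simpa using h2
    have hlt2 := lintegral_lt_of_ae_le hGmeas hFmeas hle hGfin hset
    rw [hFlint, heq] at hlt2
    exact lt_irrefl _ hlt2
end

section
/- Let $h \in (0,1]$, $Q = \delta_0$, and let $(\beta_n)_{n \ge 1}$ be $[0,1)$-valued i.i.d. random variables with common law $\mathcal{L}$. Let $P_0$ be a probability measure on $[0,1]$ with essential supremum $h$ and positive mean, and define $P_n(dx) = (1-\beta_n)\frac{x P_{n-1}(dx)}{\int y P_{n-1}(dy)} + \beta_n \delta_0(dx)$. Then for every $n \ge 1$, $P_n(dx) = (1-\beta_n)\frac{x^n P_0(dx)}{\int y^n P_0(dy)} + \beta_n\delta_0(dx)$, and $(P_n)$ converges weakly in distribution to the random measure $(1-\beta)\delta_h + \beta\,\delta_0$, where $\beta$ has law $\mathcal{L}$. -/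
open MeasureTheory Set Filter ProbabilityTheory
open scoped NNReal ENNReal

section Aux

variable {P₀ : Measure ℝ} [IsProbabilityMeasure P₀]

lemma aux_ae_mem (hsupp : P₀ (Set.Icc (0:ℝ) 1)ᶜ = 0) : ∀ᵐ x ∂P₀, x ∈ Set.Icc (0:ℝ) 1 := by
  have : {a : ℝ | ¬ a ∈ Set.Icc (0:ℝ) 1} = (Set.Icc (0:ℝ) 1)ᶜ := rfl
  rw [ae_iff, this]; exact hsupp

lemma aux_integrable_of_bdd (hsupp : P₀ (Set.Icc (0:ℝ) 1)ᶜ = 0) {φ : ℝ → ℝ}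
    (hφ : AEStronglyMeasurable φ P₀) {K : ℝ} (hK : ∀ x ∈ Set.Icc (0:ℝ) 1, |φ x| ≤ K) :
    Integrable φ P₀ := by
  refine Integrable.mono' (integrable_const K) hφ ?_
  filter_upwards [aux_ae_mem hsupp] with x hx
  simpa [Real.norm_eq_abs] using hK x hx

lemma aux_integrable_pow (hsupp : P₀ (Set.Icc (0:ℝ) 1)ᶜ = 0) (n : ℕ) :
    Integrable (fun x : ℝ => x ^ n) P₀ := by
  refine aux_integrable_of_bdd hsupp ((continuous_pow n).aestronglyMeasurable) (K := 1) ?_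
  intro x hx
  rw [abs_pow]
  exact pow_le_one₀ (abs_nonneg x) (abs_le.2 ⟨by linarith [hx.1], hx.2⟩)

/-- Integral of a continuous function against the closed-form measure. -/
lemma aux_integral_closed (hsupp : P₀ (Set.Icc (0:ℝ) 1)ᶜ = 0)
    (n : ℕ) (e M b : ℝ) (he : 0 ≤ e) (hM : 0 < M) (hb : 0 ≤ b)
    (φ : ℝ → ℝ) (hφ : Continuous φ) :
    ∫ x, φ x ∂(P₀.withDensity (fun x => ENNReal.ofReal (e * x ^ n / M))
        + ENNReal.ofReal b • Measure.dirac 0)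
      = (e / M) * ∫ x, φ x * x ^ n ∂P₀ + b * φ 0 := by
  obtain ⟨K, hK⟩ := isCompact_Icc.exists_bound_of_continuousOn
    (hφ.continuousOn : ContinuousOn φ (Set.Icc (0:ℝ) 1))
  have hK0 : 0 ≤ K := le_trans (norm_nonneg _) (hK 0 (by norm_num))
  set w : ℝ → ℝ≥0 := fun x => (e * x ^ n / M).toNNReal with hw
  have hwm : Measurable w :=
    (((measurable_id.pow_const n).const_mul e).div_const M).real_toNNReal
  have hdens : (fun x : ℝ => ENNReal.ofReal (e * x ^ n / M)) = fun x => ((w x : ℝ≥0) : ℝ≥0∞) := rfl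
  have hfun : (fun x => w x • φ x) = fun x => ((w x : ℝ≥0) : ℝ) * φ x :=
    funext fun x => by rw [NNReal.smul_def, smul_eq_mul]
  have hsm : ∀ᵐ x ∂P₀, w x • φ x = (e / M) * (φ x * x ^ n) := by
    filter_upwards [aux_ae_mem hsupp] with x hx
    have h1 : 0 ≤ e * x ^ n / M := by
      have : 0 ≤ x ^ n := pow_nonneg hx.1 n
      positivity
    have h2 : ((w x : ℝ≥0) : ℝ) = e * x ^ n / M := Real.coe_toNNReal _ h1
    rw [NNReal.smul_def, smul_eq_mul, h2]
    ring
  have hint1 : Integrable (fun x => w x • φ x) P₀ := by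
    rw [hfun]
    refine aux_integrable_of_bdd hsupp ?_ (K := (e / M) * K) ?_
    · exact ((measurable_coe_nnreal_real.comp hwm).mul
        hφ.measurable).aestronglyMeasurable
    · intro x hx
      show |((w x : ℝ≥0) : ℝ) * φ x| ≤ (e / M) * K
      rw [abs_mul]
      have hx1 : 0 ≤ x := hx.1
      have hxn : x ^ n ≤ 1 := pow_le_one₀ hx1 hx.2
      have hwb : (w x : ℝ) ≤ e / M := by
        rw [hw]
        simp only [Real.coe_toNNReal']
        refine max_le ?_ (by positivity)
        rw [div_le_div_iff₀ hM hM]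
        nlinarith [mul_le_mul_of_nonneg_left hxn (mul_nonneg he hM.le)]
      have habs : |φ x| ≤ K := by simpa [Real.norm_eq_abs] using hK x hx
      have : |(w x : ℝ)| = (w x : ℝ) := abs_of_nonneg (w x).coe_nonneg
      rw [this]
      exact mul_le_mul hwb habs (abs_nonneg _) (by positivity)
  have hintw : Integrable φ (P₀.withDensity fun x => ((w x : ℝ≥0) : ℝ≥0∞)) :=
    (integrable_withDensity_iff_integrable_smul hwm).2 hint1
  have hintd : Integrable φ (ENNReal.ofReal b • Measure.dirac (0:ℝ)) := by
    refine Integrable.smul_measure ?_ ENNReal.ofReal_ne_top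
    exact (integrable_const (φ 0)).congr (ae_eq_dirac φ).symm
  rw [hdens, integral_add_measure hintw hintd,
    integral_withDensity_eq_integral_smul hwm φ, integral_congr_ae hsm,
    integral_const_mul, integral_smul_measure, integral_dirac,
    ENNReal.toReal_ofReal hb, smul_eq_mul]

lemma aux_pow_integral_ge (hsupp : P₀ (Set.Icc (0:ℝ) 1)ᶜ = 0) {bb : ℝ} (hb0 : 0 ≤ bb) (n : ℕ) :
    bb ^ n * (P₀ (Set.Icc bb 1)).toReal ≤ ∫ x, x ^ n ∂P₀ := by
  have hint := aux_integrable_pow hsupp n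
  have h1 : bb ^ n * (P₀ (Set.Icc bb 1)).toReal = ∫ _x in Set.Icc bb 1, bb ^ n ∂P₀ := by
    rw [setIntegral_const, smul_eq_mul, mul_comm]
    rfl
  rw [h1]
  refine le_trans (setIntegral_mono_on ((integrable_const _).integrableOn)
      hint.integrableOn measurableSet_Icc fun x hx => pow_le_pow_left₀ hb0 hx.1 n) ?_
  refine setIntegral_le_integral hint ?_
  filter_upwards [aux_ae_mem hsupp] with x hx
  exact pow_nonneg hx.1 n

lemma aux_measure_Icc_pos (hsupp : P₀ (Set.Icc (0:ℝ) 1)ᶜ = 0) {h : ℝ}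
    (hh : h ∈ Set.Ioc (0:ℝ) 1) (hS : sSup {x : ℝ | 0 < P₀ (Set.Icc x 1)} = h)
    {bb : ℝ} (hbh : bb < h) : 0 < (P₀ (Set.Icc bb 1)).toReal := by
  have hne : {x : ℝ | 0 < P₀ (Set.Icc x 1)}.Nonempty := by
    by_contra hc
    rw [not_nonempty_iff_eq_empty] at hc
    rw [hc, Real.sSup_empty] at hS
    linarith [hh.1]
  obtain ⟨a, haS, hba⟩ := exists_lt_of_lt_csSup hne (hS ▸ hbh)
  have hpos : 0 < P₀ (Set.Icc bb 1) :=
    lt_of_lt_of_le haS (measure_mono (Set.Icc_subset_Icc_left hba.le))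
  exact ENNReal.toReal_pos hpos.ne' (measure_ne_top _ _)

lemma aux_Mpos (hsupp : P₀ (Set.Icc (0:ℝ) 1)ᶜ = 0) {h : ℝ}
    (hh : h ∈ Set.Ioc (0:ℝ) 1) (hS : sSup {x : ℝ | 0 < P₀ (Set.Icc x 1)} = h) (n : ℕ) :
    0 < ∫ x, x ^ n ∂P₀ := by
  refine lt_of_lt_of_le ?_ (aux_pow_integral_ge hsupp (by linarith [hh.1] : (0:ℝ) ≤ h / 2) n)
  have h1 : 0 < (P₀ (Set.Icc (h/2) 1)).toReal :=
    aux_measure_Icc_pos hsupp hh hS (by linarith [hh.1])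
  have h2 : 0 < (h/2) ^ n := pow_pos (by linarith [hh.1]) n
  positivity

lemma aux_ae_le_h (hsupp : P₀ (Set.Icc (0:ℝ) 1)ᶜ = 0) {h : ℝ}
    (hh : h ∈ Set.Ioc (0:ℝ) 1) (hS : sSup {x : ℝ | 0 < P₀ (Set.Icc x 1)} = h) :
    ∀ᵐ x ∂P₀, x ≤ h := by
  have hbdd : BddAbove {x : ℝ | 0 < P₀ (Set.Icc x 1)} := by
    refine ⟨1, fun x hx => ?_⟩
    by_contra hc
    push_neg at hc
    have : Set.Icc x 1 = ∅ := Set.Icc_eq_empty (by linarith)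
    rw [Set.mem_setOf_eq, this] at hx
    simp at hx
  have hnull : ∀ b, h < b → P₀ (Set.Icc b 1) = 0 := by
    intro b hb
    by_contra hc
    have hbS : b ∈ {x : ℝ | 0 < P₀ (Set.Icc x 1)} := pos_iff_ne_zero.2 hc
    have : b ≤ h := hS ▸ le_csSup hbdd hbS
    linarith
  have h2 : P₀ (Set.Ioc h 1) = 0 := by
    have hsub : Set.Ioc h 1 ⊆ ⋃ k : ℕ, Set.Icc (h + 1/(k+1)) 1 := by
      intro x hx
      obtain ⟨k, hk⟩ := exists_nat_one_div_lt (show (0:ℝ) < x - h by linarith [hx.1])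
      exact Set.mem_iUnion.2 ⟨k, ⟨by push_cast at hk ⊢; linarith, hx.2⟩⟩
    refine measure_mono_null hsub (measure_iUnion_null fun k => hnull _ ?_)
    have : (0:ℝ) < 1/((k:ℝ)+1) := by positivity
    linarith
  have h3 : {x : ℝ | ¬ x ≤ h} ⊆ (Set.Icc (0:ℝ) 1)ᶜ ∪ Set.Ioc h 1 := by
    intro x hx
    rw [Set.mem_setOf_eq, not_le] at hx
    rcases le_or_gt x 1 with hx1 | hx1
    · exact Or.inr ⟨hx, hx1⟩
    · exact Or.inl (fun hmem => by linarith [hmem.2])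
  rw [ae_iff]
  exact measure_mono_null h3 (measure_union_null hsupp h2)

lemma aux_tendsto_ratio (hsupp : P₀ (Set.Icc (0:ℝ) 1)ᶜ = 0) {h : ℝ}
    (hh : h ∈ Set.Ioc (0:ℝ) 1) (hS : sSup {x : ℝ | 0 < P₀ (Set.Icc x 1)} = h)
    (f : ℝ → ℝ) (hf : Continuous f) :
    Tendsto (fun n : ℕ => (∫ x, f x * x ^ n ∂P₀) / ∫ x, x ^ n ∂P₀) atTop (nhds (f h)) := by
  obtain ⟨K, hK⟩ := isCompact_Icc.exists_bound_of_continuousOn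
    (hf.continuousOn : ContinuousOn f (Set.Icc (0:ℝ) 1))
  have hKh : |f h| ≤ K := by
    simpa [Real.norm_eq_abs] using hK h ⟨hh.1.le, hh.2⟩
  have hK0 : 0 ≤ K := le_trans (abs_nonneg _) hKh
  rw [Metric.tendsto_atTop]
  intro ε hε
  obtain ⟨δ₀, hδ₀pos, hδ₀⟩ := Metric.continuousAt_iff.1 hf.continuousAt (ε/2) (by linarith)
  set δ := min δ₀ h with hδdef
  have hδpos : 0 < δ := lt_min hδ₀pos hh.1
  have hδh : δ ≤ h := min_le_right _ _
  set bb := h - δ/2 with hbbdef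
  have hbb0 : 0 < bb := by simp only [hbbdef]; linarith
  set a := h - δ with hadef
  have ha0 : 0 ≤ a := by simp only [hadef]; linarith
  have hab : a < bb := by simp only [hadef, hbbdef]; linarith
  set c := (P₀ (Set.Icc bb 1)).toReal with hcdef
  have hc : 0 < c := aux_measure_Icc_pos hsupp hh hS (by simp only [hbbdef]; linarith)
  set r := a / bb with hrdef
  have hr0 : 0 ≤ r := div_nonneg ha0 hbb0.le
  have hr1 : r < 1 := (div_lt_one hbb0).2 hab
  have hgeo : Tendsto (fun n : ℕ => (2*K/c) * r ^ n) atTop (nhds 0) := by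
    simpa using (tendsto_pow_atTop_nhds_zero_of_lt_one hr0 hr1).const_mul (2*K/c)
  obtain ⟨N, hN⟩ := eventually_atTop.1 (hgeo.eventually_lt_const (show (0:ℝ) < ε/2 by linarith))
  refine ⟨N, fun n hn => ?_⟩
  have hM : 0 < ∫ x, x ^ n ∂P₀ := aux_Mpos hsupp hh hS n
  have hMlb : bb ^ n * c ≤ ∫ x, x ^ n ∂P₀ := aux_pow_integral_ge hsupp hbb0.le n
  have hintpow := aux_integrable_pow hsupp n
  have hintfx : Integrable (fun x => f x * x ^ n) P₀ := by
    refine aux_integrable_of_bdd hsupp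
      ((hf.mul (continuous_pow n)).aestronglyMeasurable) (K := K) fun x hx => ?_
    rw [abs_mul, abs_pow]
    have h1 : |f x| ≤ K := by simpa [Real.norm_eq_abs] using hK x hx
    have h2 : |x| ^ n ≤ 1 := pow_le_one₀ (abs_nonneg _) (abs_le.2 ⟨by linarith [hx.1], hx.2⟩)
    nlinarith [abs_nonneg (f x)]
  have key : |(∫ x, f x * x ^ n ∂P₀) - f h * ∫ x, x ^ n ∂P₀|
      ≤ ε/2 * (∫ x, x ^ n ∂P₀) + 2*K*a^n := by
    have h1 : (∫ x, f x * x ^ n ∂P₀) - f h * ∫ x, x ^ n ∂P₀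
        = ∫ x, (f x - f h) * x ^ n ∂P₀ := by
      rw [show (fun x => (f x - f h) * x ^ n) = fun x => f x * x ^ n - f h * x ^ n from
        funext fun x => by ring, integral_sub hintfx (hintpow.const_mul _), integral_const_mul]
    have h2 : |∫ x, (f x - f h) * x ^ n ∂P₀| ≤ ∫ x, |f x - f h| * |x| ^ n ∂P₀ := by
      simpa [Real.norm_eq_abs] using
        norm_integral_le_integral_norm (fun x => (f x - f h) * x ^ n) (μ := P₀)
    have hintabs : Integrable (fun x => |f x - f h| * |x| ^ n) P₀ := by
      refine aux_integrable_of_bdd hsupp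
        (((hf.sub continuous_const).abs.mul (continuous_abs.pow n)).aestronglyMeasurable)
        (K := 2*K) fun x hx => ?_
      rw [abs_of_nonneg (by positivity : (0:ℝ) ≤ |f x - f h| * |x| ^ n)]
      have h1' : |f x| ≤ K := by simpa [Real.norm_eq_abs] using hK x hx
      have h2' : |x| ^ n ≤ 1 := pow_le_one₀ (abs_nonneg _) (abs_le.2 ⟨by linarith [hx.1], hx.2⟩)
      have h3' : |f x - f h| ≤ 2*K := by
        calc |f x - f h| ≤ |f x| + |f h| := abs_sub _ _
          _ ≤ 2*K := by linarith
      nlinarith [abs_nonneg (f x - f h), abs_sub_abs_le_abs_sub (f x) (f h)]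
    have h3 : ∫ x, |f x - f h| * |x| ^ n ∂P₀ ≤ ∫ x, (ε/2 * x ^ n + 2*K*a^n) ∂P₀ := by
      refine integral_mono_ae hintabs ((hintpow.const_mul _).add (integrable_const _)) ?_
      filter_upwards [aux_ae_mem hsupp, aux_ae_le_h hsupp hh hS] with x hx hxh
      rcases le_or_gt x a with hcase | hcase
      · have hb1 : |f x - f h| * |x| ^ n ≤ 2*K*a^n := by
          rw [abs_of_nonneg hx.1]
          have h1' : |f x| ≤ K := by simpa [Real.norm_eq_abs] using hK x hx
          have h3' : |f x - f h| ≤ 2*K := by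
            calc |f x - f h| ≤ |f x| + |f h| := abs_sub _ _
              _ ≤ 2*K := by linarith
          exact mul_le_mul h3' (pow_le_pow_left₀ hx.1 hcase n) (pow_nonneg hx.1 n) (by linarith)
        have : 0 ≤ ε/2 * x ^ n := by
          have := pow_nonneg hx.1 n; positivity
        linarith
      · have hfx : |f x - f h| ≤ ε/2 := by
          have hdist : dist x h < δ₀ := by
            rw [Real.dist_eq, abs_of_nonpos (by linarith : x - h ≤ 0)]
            simp only [hadef] at hcase
            have : δ ≤ δ₀ := min_le_left _ _
            linarith
          exact (hδ₀ hdist).le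
        have h4' : |f x - f h| * |x| ^ n ≤ ε/2 * x ^ n := by
          rw [abs_of_nonneg hx.1]
          exact mul_le_mul_of_nonneg_right hfx (pow_nonneg hx.1 n)
        have : 0 ≤ 2*K*a^n := by positivity
        linarith
    have h4 : ∫ x, (ε/2 * x ^ n + 2*K*a^n) ∂P₀
        = ε/2 * (∫ x, x ^ n ∂P₀) + 2*K*a^n := by
      rw [integral_add (hintpow.const_mul _) (integrable_const _), integral_const_mul,
        integral_const]
      simp
    rw [h1]
    linarith
  have hdist : dist ((∫ x, f x * x ^ n ∂P₀) / ∫ x, x ^ n ∂P₀) (f h)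
      = |(∫ x, f x * x ^ n ∂P₀) - f h * ∫ x, x ^ n ∂P₀| / (∫ x, x ^ n ∂P₀) := by
    rw [Real.dist_eq]
    rw [show (∫ x, f x * x ^ n ∂P₀) / (∫ x, x ^ n ∂P₀) - f h
      = ((∫ x, f x * x ^ n ∂P₀) - f h * ∫ x, x ^ n ∂P₀) / (∫ x, x ^ n ∂P₀) by
        field_simp]
    rw [abs_div, abs_of_pos hM]
  rw [hdist]
  calc |(∫ x, f x * x ^ n ∂P₀) - f h * ∫ x, x ^ n ∂P₀| / (∫ x, x ^ n ∂P₀)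
      ≤ (ε/2 * (∫ x, x ^ n ∂P₀) + 2*K*a^n) / (∫ x, x ^ n ∂P₀) :=
        by gcongr
    _ = ε/2 + (2*K*a^n) / (∫ x, x ^ n ∂P₀) := by field_simp
    _ ≤ ε/2 + (2*K/c) * r ^ n := by
        have h5 : (2*K*a^n) / (∫ x, x ^ n ∂P₀) ≤ (2*K*a^n) / (bb^n * c) := by
          apply div_le_div_of_nonneg_left (by positivity) (by positivity) hMlb
        have h6 : (2*K*a^n)/(bb^n*c) = (2*K/c) * r ^ n := by
          rw [hrdef, div_pow, div_mul_div_comm, mul_comm c (bb^n)]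
        linarith
    _ < ε/2 + ε/2 := by linarith [hN n hn]
    _ = ε := by ring

end Aux

theorem stmt_14 {Ω : Type*} [MeasurableSpace Ω] (μpr : Measure Ω) [IsProbabilityMeasure μpr]
    (h : ℝ) (hh : h ∈ Set.Ioc (0:ℝ) 1)
    (L : Measure ℝ) (hL : IsProbabilityMeasure L) (hLsupp : L (Set.Ico (0:ℝ) 1)ᶜ = 0)
    (β : ℕ → Ω → ℝ) (hβm : ∀ n, Measurable (β n))
    (hβr : ∀ n ω, β n ω ∈ Set.Ico (0:ℝ) 1)
    (hiid : iIndepFun β μpr)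
    (hlaw : ∀ n, Measure.map (β n) μpr = L)
    (P₀ : Measure ℝ) (hP₀ : IsProbabilityMeasure P₀) (hP₀supp : P₀ (Set.Icc (0:ℝ) 1)ᶜ = 0)
    (hS : sSup {x : ℝ | 0 < P₀ (Set.Icc x 1)} = h) (hmean : 0 < ∫ y, y ∂P₀)
    (P : ℕ → Ω → Measure ℝ) (hP0 : ∀ ω, P 0 ω = P₀)
    (hmeanP : ∀ n ω, 0 < ∫ y, y ∂P n ω)
    (hrec : ∀ n, 1 ≤ n → ∀ ω, P n ω
      = (P (n-1) ω).withDensity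
          (fun x => ENNReal.ofReal ((1 - β n ω) * x / ∫ y, y ∂P (n-1) ω))
        + ENNReal.ofReal (β n ω) • Measure.dirac 0) :
    (∀ n, 1 ≤ n → ∀ ω, P n ω
        = P₀.withDensity
            (fun x => ENNReal.ofReal ((1 - β n ω) * x ^ n / ∫ y, y ^ n ∂P₀))
          + ENNReal.ofReal (β n ω) • Measure.dirac 0)
      ∧ (∀ f : ℝ → ℝ, Continuous f → ∀ g : BoundedContinuousFunction ℝ ℝ,
          Tendsto (fun n : ℕ => ∫ ω, g (∫ x, f x ∂P n ω) ∂μpr) atTop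
            (nhds (∫ t, g ((1 - t) * f h + t * f 0) ∂L))) := by
  haveI := hP₀
  haveI := hL
  have hMpos : ∀ n : ℕ, 0 < ∫ y, y ^ n ∂P₀ := fun n => aux_Mpos hP₀supp hh hS n
  have part1 : ∀ n, 1 ≤ n → ∀ ω, P n ω
      = P₀.withDensity
          (fun x => ENNReal.ofReal ((1 - β n ω) * x ^ n / ∫ y, y ^ n ∂P₀))
        + ENNReal.ofReal (β n ω) • Measure.dirac 0 := by
    intro n hn
    induction n, hn using Nat.le_induction with
    | base =>
      intro ω
      have h1 := hrec 1 le_rfl ω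
      norm_num at h1
      rw [hP0 ω] at h1
      rw [h1]
      congr 1
      congr 1
      funext x
      simp [pow_one]
    | succ n hn ih =>
      intro ω
      have h1 := hrec (n+1) (by omega) ω
      simp only [Nat.add_sub_cancel] at h1
      rw [ih ω] at h1
      have he : (0:ℝ) ≤ 1 - β n ω := by linarith [(hβr n ω).2]
      have he' : (0:ℝ) < 1 - β n ω := by linarith [(hβr n ω).2]
      have hm : (∫ y, y ∂(P₀.withDensity
            (fun x => ENNReal.ofReal ((1 - β n ω) * x ^ n / ∫ y, y ^ n ∂P₀))
          + ENNReal.ofReal (β n ω) • Measure.dirac 0))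
          = (1 - β n ω) * (∫ y, y ^ (n+1) ∂P₀) / ∫ y, y ^ n ∂P₀ := by
        have h2 := aux_integral_closed hP₀supp n (1 - β n ω) (∫ y, y ^ n ∂P₀) (β n ω)
          he (hMpos n) (hβr n ω).1 (fun y => y) continuous_id
        rw [h2]
        have h3 : (∫ x, x * x ^ n ∂P₀) = ∫ y, y ^ (n+1) ∂P₀ :=
          integral_congr_ae (Eventually.of_forall fun x => by ring)
        rw [h3]
        ring
      rw [hm] at h1
      rw [h1]
      congr 1
      have hg1m : Measurable (fun x : ℝ =>
          ENNReal.ofReal ((1 - β n ω) * x ^ n / ∫ y, y ^ n ∂P₀)) :=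
        (((measurable_id.pow_const n).const_mul _).div_const _).ennreal_ofReal
      have hg2m : Measurable (fun x : ℝ => ENNReal.ofReal ((1 - β (n+1) ω) * x
          / ((1 - β n ω) * (∫ y, y ^ (n+1) ∂P₀) / ∫ y, y ^ n ∂P₀))) :=
        ((measurable_id.const_mul _).div_const _).ennreal_ofReal
      rw [withDensity_add_measure, withDensity_smul_measure]
      have hdirac : (Measure.dirac (0:ℝ)).withDensity
          (fun x : ℝ => ENNReal.ofReal ((1 - β (n+1) ω) * x
          / ((1 - β n ω) * (∫ y, y ^ (n+1) ∂P₀) / ∫ y, y ^ n ∂P₀))) = 0 := by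
        refine (withDensity_eq_zero_iff hg2m.aemeasurable).2 ?_
        rw [Filter.EventuallyEq, ae_dirac_eq, Filter.eventually_pure]
        simp
      rw [hdirac, smul_zero, add_zero, ← withDensity_mul _ hg1m hg2m]
      refine withDensity_congr_ae ?_
      filter_upwards [aux_ae_mem hP₀supp] with x hx
      simp only [Pi.mul_apply]
      rw [← ENNReal.ofReal_mul
        (div_nonneg (mul_nonneg he (pow_nonneg hx.1 n)) (hMpos n).le)]
      congr 1
      obtain ⟨Mn, hMn', hMnpos⟩ : ∃ Mn : ℝ, (∫ y, y ^ n ∂P₀) = Mn ∧ 0 < Mn :=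
        ⟨_, rfl, hMpos n⟩
      obtain ⟨Mn1, hMn1', hMn1pos⟩ : ∃ Mn1 : ℝ, (∫ y, y ^ (n+1) ∂P₀) = Mn1 ∧ 0 < Mn1 :=
        ⟨_, rfl, hMpos (n+1)⟩
      rw [hMn', hMn1']
      have hMn0 : Mn ≠ 0 := ne_of_gt hMnpos
      have hMn10 : Mn1 ≠ 0 := ne_of_gt hMn1pos
      have he0 : (1 - β n ω) ≠ 0 := ne_of_gt he'
      field_simp
      ring
  refine ⟨part1, ?_⟩
  intro f hf g
  have hAt : Tendsto (fun n : ℕ => (∫ x, f x * x ^ n ∂P₀) / ∫ x, x ^ n ∂P₀)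
      atTop (nhds (f h)) := aux_tendsto_ratio hP₀supp hh hS f hf
  have hlim : Tendsto (fun n : ℕ => ∫ t, g ((1 - t) * ((∫ x, f x * x ^ n ∂P₀)
        / ∫ x, x ^ n ∂P₀) + t * f 0) ∂L) atTop
      (nhds (∫ t, g ((1 - t) * f h + t * f 0) ∂L)) := by
    refine tendsto_integral_of_dominated_convergence (fun _ => ‖g‖) ?_ (integrable_const _) ?_ ?_
    · intro n
      exact (g.continuous.comp (((continuous_const.sub continuous_id).mul
        continuous_const).add (continuous_id.mul continuous_const))).aestronglyMeasurable
    · intro n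
      exact Eventually.of_forall fun t => g.norm_coe_le_norm _
    · refine Eventually.of_forall fun t => ?_
      have h0 : Tendsto (fun n : ℕ => (1 - t) * ((∫ x, f x * x ^ n ∂P₀)
          / ∫ x, x ^ n ∂P₀) + t * f 0) atTop (nhds ((1 - t) * f h + t * f 0)) :=
        (hAt.const_mul _).add tendsto_const_nhds
      exact ((g.continuous.tendsto _).comp h0)
  refine hlim.congr' ?_
  filter_upwards [eventually_ge_atTop 1] with n hn
  have hω : ∀ ω, (∫ x, f x ∂P n ω)
      = (1 - β n ω) * ((∫ x, f x * x ^ n ∂P₀) / ∫ x, x ^ n ∂P₀) + β n ω * f 0 := by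
    intro ω
    rw [part1 n hn ω]
    have he : (0:ℝ) ≤ 1 - β n ω := by linarith [(hβr n ω).2]
    rw [aux_integral_closed hP₀supp n (1 - β n ω) (∫ y, y ^ n ∂P₀) (β n ω)
      he (hMpos n) (hβr n ω).1 f hf]
    have : (∫ y, y ^ n ∂P₀) = ∫ x, x ^ n ∂P₀ := rfl
    rw [this]
    ring
  have hcont : Continuous (fun t : ℝ => g ((1 - t) * ((∫ x, f x * x ^ n ∂P₀)
      / ∫ x, x ^ n ∂P₀) + t * f 0)) := g.continuous.comp
    (((continuous_const.sub continuous_id).mul continuous_const).add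
      (continuous_id.mul continuous_const))
  calc ∫ t, g ((1 - t) * ((∫ x, f x * x ^ n ∂P₀) / ∫ x, x ^ n ∂P₀) + t * f 0) ∂L
      = ∫ ω, g ((1 - β n ω) * ((∫ x, f x * x ^ n ∂P₀) / ∫ x, x ^ n ∂P₀)
          + β n ω * f 0) ∂μpr := by
        rw [← hlaw n, integral_map (hβm n).aemeasurable hcont.aestronglyMeasurable]
    _ = ∫ ω, g (∫ x, f x ∂P n ω) ∂μpr := by
        refine integral_congr_ae (Eventually.of_forall fun ω => ?_)
        simp only [hω ω]
end
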